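/- arXiv:1906.06258 — 7 statements merged into one kernel-verified Lean document; each statement's English description precedes it below -/
import Mathlib

section
/- Let s₁ and s₂ be rationals with 0 < s₂ < s₁ < 1. Write d₀, d₁, …, d_{λ+1} for the denominators (in lowest terms) of the terms of the minimal unimodular chain from s₁ to s₂; write d⁽¹⁾₀, …, d⁽¹⁾_{λ₁+1} for the denominators of the terms of the minimal unimodular chain from s₁ to −1; and write d⁽²⁾₀, …, d⁽²⁾_{λ₂+1} for the denominators of the terms of the minimal unimodular chain from 1 − s₂ to −1. Let l₁ and l₂, with 0 ≤ l_j < max(1, λ_j) for j = 1, 2, be maximal such that d⁽¹⁾_{l₁} = d⁽²⁾_{l₂} (such a pair exists, and it is well defined since the denominators d⁽ʲ⁾₀ > d⁽ʲ⁾₁ > ⋯ > d⁽ʲ⁾_{λ_j} are strictly decreasing so each value occurs at most once). Then d_i = d⁽¹⁾_i for all 1 ≤ i ≤ l₁, and d_{λ+1−i} = d⁽²⁾_i for all 1 ≤ i ≤ l₂. -/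
/-- `q 0, q 1, …, q n` is a unimodular chain from `t` down to `t'`:
a strictly decreasing sequence of rationals starting at `t` and ending at `t'`
such that consecutive terms `mᵢ/dᵢ > m_{i+1}/d_{i+1}` (in lowest terms)
satisfy `mᵢ·d_{i+1} − m_{i+1}·dᵢ = 1`. -/
def IsUnimodChain (q : ℕ → ℚ) (n : ℕ) (t t' : ℚ) : Prop :=
  q 0 = t ∧ q n = t' ∧
  (∀ i, i < n → q (i + 1) < q i) ∧
  (∀ i, i < n →
    (q i).num * ((q (i + 1)).den : ℤ) - (q (i + 1)).num * ((q i).den : ℤ) = 1)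

/-- A unimodular chain is minimal if no interior term is the Farey mediant
of its two neighbours. -/
def IsMinimalUnimodChain (q : ℕ → ℚ) (n : ℕ) (t t' : ℚ) : Prop :=
  IsUnimodChain q n t t' ∧
  ∀ i, 1 ≤ i → i < n →
    ¬ ((q i).num = (q (i - 1)).num + (q (i + 1)).num ∧
       (q i).den = (q (i - 1)).den + (q (i + 1)).den)

namespace UCaux

/-- determinant of two rationals viewed as primitive integer vectors -/
def dt (x y : ℚ) : ℤ := x.num * (y.den : ℤ) - y.num * (x.den : ℤ)

lemma copr (x : ℚ) : IsCoprime x.num (x.den : ℤ) := by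
  rw [Int.isCoprime_iff_gcd_eq_one]
  simpa [Int.gcd] using x.reduced

/-- if det(x, (a,b)) = 0 then (a,b) is an integer multiple of (num x, den x) -/
lemma smul_of_dt_zero (x : ℚ) (a b : ℤ) (h : a * (x.den : ℤ) - b * x.num = 0) :
    ∃ j : ℤ, a = j * x.num ∧ b = j * (x.den : ℤ) := by
  obtain ⟨u, v, huv⟩ := copr x
  refine ⟨u * a + v * b, ?_, ?_⟩
  · linear_combination (-a) * huv + v * h
  · linear_combination (-b) * huv + (-u) * h

lemma refl_num_den (x : ℚ) : (1 - x).num = (x.den : ℤ) - x.num ∧ (1 - x).den = x.den := by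
  have hd : (0:ℤ) < (x.den:ℤ) := mod_cast x.den_pos
  have hco : IsCoprime ((x.den:ℤ) - x.num) (x.den:ℤ) := by
    obtain ⟨u, v, huv⟩ := copr x
    exact ⟨-u, u + v, by ring_nf; linarith [huv]⟩
  have hco' : ((x.den:ℤ) - x.num).natAbs.Coprime ((x.den:ℤ)).natAbs := by
    rw [Int.isCoprime_iff_gcd_eq_one] at hco
    exact hco
  have hx : (1 - x) = (((x.den:ℤ) - x.num : ℤ) : ℚ) / ((x.den:ℤ) : ℚ) := by
    rw [eq_div_iff (by positivity)]
    push_cast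
    have hxd : x * (x.den : ℚ) = (x.num : ℚ) := Rat.mul_den_eq_num x
    linear_combination -hxd
  constructor
  · rw [hx, Rat.num_div_eq_of_coprime hd hco']
  · have := Rat.den_div_eq_of_coprime hd hco'
    rw [hx]
    exact_mod_cast this

lemma refl_den (x : ℚ) : (1 - x).den = x.den := (refl_num_den x).2
lemma refl_num (x : ℚ) : (1 - x).num = (x.den : ℤ) - x.num := (refl_num_den x).1

lemma refl_refl (x : ℚ) : 1 - (1 - x) = x := by ring

lemma dt_refl (x y : ℚ) : dt (1 - x) (1 - y) = dt y x := by
  unfold dt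
  rw [refl_num, refl_num, refl_den, refl_den]
  ring

/-- unique lower neighbour with smaller denominator -/
lemma unique_parent {x y z : ℚ} (hy : dt x y = 1) (hz : dt x z = 1)
    (hdy : y.den < x.den) (hdz : z.den < x.den) : y = z := by
  have h : (y.num - z.num) * (x.den : ℤ) - ((y.den : ℤ) - (z.den : ℤ)) * x.num = 0 := by
    unfold dt at hy hz; linarith [hy, hz]
  obtain ⟨j, hj1, hj2⟩ := smul_of_dt_zero x _ _ h
  have hd : (0:ℤ) < (x.den:ℤ) := mod_cast x.den_pos
  have hy' : (y.den : ℤ) < (x.den : ℤ) := mod_cast hdy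
  have hz' : (z.den : ℤ) < (x.den : ℤ) := mod_cast hdz
  have hyp : (0:ℤ) < (y.den:ℤ) := mod_cast y.den_pos
  have hzp : (0:ℤ) < (z.den:ℤ) := mod_cast z.den_pos
  have hj0 : j = 0 := by
    rcases lt_trichotomy j 0 with h' | h' | h'
    · nlinarith
    · exact h'
    · nlinarith
  subst hj0
  simp at hj1 hj2
  exact Rat.ext (by linarith) (by exact_mod_cast sub_eq_zero.mp (by linarith : (y.den:ℤ) - z.den = 0))


/-- mediant relation: if L is lower parent and U upper parent of t, then
v_t = v_L + v_U and det(U,L) = 1. -/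
lemma mediant {t L U : ℚ} (h1 : dt t L = 1) (h2 : dt U t = 1)
    (hL : L.den < t.den) (hU : U.den < t.den) :
    U.num = t.num - L.num ∧ (U.den : ℤ) = (t.den : ℤ) - (L.den : ℤ) ∧ dt U L = 1 := by
  set a : ℤ := t.num - L.num - U.num with ha
  set b : ℤ := (t.den : ℤ) - (L.den : ℤ) - (U.den : ℤ) with hb
  have h : a * (t.den : ℤ) - b * t.num = 0 := by
    unfold dt at h1 h2
    rw [ha, hb]
    linear_combination h1 - h2
  obtain ⟨j, hj1, hj2⟩ := smul_of_dt_zero t a b h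
  have hLp : (0:ℤ) < (L.den:ℤ) := mod_cast L.den_pos
  have hUp : (0:ℤ) < (U.den:ℤ) := mod_cast U.den_pos
  have hL' : (L.den : ℤ) < (t.den : ℤ) := mod_cast hL
  have hU' : (U.den : ℤ) < (t.den : ℤ) := mod_cast hU
  have hd : (0:ℤ) < (t.den:ℤ) := mod_cast t.den_pos
  have hj0 : j = 0 := by
    rcases lt_trichotomy j 0 with h' | h' | h'
    · nlinarith
    · exact h'
    · nlinarith
  subst hj0
  simp only [zero_mul] at hj1 hj2
  refine ⟨by omega, by omega, ?_⟩
  have hUnum : U.num = t.num - L.num := by omega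
  have hUden : (U.den : ℤ) = (t.den : ℤ) - (L.den : ℤ) := by omega
  unfold dt at h1 h2 ⊢
  rw [hUnum, hUden] at *
  linarith [h1, h2]

/-- equal denominators of unimodularly-adjacent rationals force den = 1 -/
lemma den_eq_one_of_dt {x y : ℚ} (h : dt x y = 1) (hd : x.den = y.den) : x.den = 1 := by
  unfold dt at h
  rw [← hd] at h
  have : (x.den : ℤ) ∣ 1 := ⟨x.num - y.num, by linarith⟩
  have := Int.le_of_dvd one_pos this
  have hp : 0 < x.den := x.den_pos
  omega

/-- denominators ≥ 2 for rationals strictly between two integers-worth bounds (0,1) -/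
lemma two_le_den {x : ℚ} (h0 : 0 < x) (h1 : x < 1) : 2 ≤ x.den := by
  by_contra h
  have hd : x.den = 1 := by have := x.den_pos; omega
  have hx : (x.num : ℚ) = x := Rat.coe_int_num_of_den_eq_one hd
  have h0' : 0 < x.num := Rat.num_pos.mpr h0
  have h1' : (x.num : ℚ) < 1 := by rw [hx]; exact h1
  have : x.num < 1 := by exact_mod_cast h1'
  omega


section Chains

variable (q : ℕ → ℚ) (n : ℕ)

/-- values decrease along a chain -/
lemma chain_anti (hlt : ∀ i, i < n → q (i + 1) < q i) :
    ∀ a b, a < b → b ≤ n → q b < q a := by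
  intro a b hab hbn
  induction b with
  | zero => omega
  | succ b ih =>
    rcases Nat.lt_or_ge a b with h' | h'
    · exact lt_trans (hlt b (by omega)) (ih h' (by omega))
    · have : a = b := by omega
      subst this
      exact hlt a (by omega)

/-- dens decrease along a strictly-den-decreasing prefix -/
lemma den_anti (i : ℕ) (hden : ∀ k, k < i → (q (k+1)).den < (q k).den) :
    ∀ a b, a ≤ b → b ≤ i → (q b).den ≤ (q a).den := by
  intro a b hab hbn
  induction b with
  | zero => simp [Nat.le_zero.mp hab]
  | succ b ih =>
    rcases Nat.lt_or_ge a (b+1) with h' | h'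
    · have h2 := hden b (by omega)
      rcases Nat.lt_or_ge a b with h3 | h3
      · have := ih h3.le (by omega); omega
      · have : a = b := by omega
        subst this; omega
    · have : a = b + 1 := by omega
      subst this; omega

lemma den_anti_strict (i : ℕ) (hden : ∀ k, k < i → (q (k+1)).den < (q k).den) :
    ∀ a b, a < b → b ≤ i → (q b).den < (q a).den := by
  intro a b hab hbn
  have h1 := hden a (by omega)
  have h2 := den_anti q i hden (a+1) b (by omega) hbn
  omega

/-- the three-term recurrence from minimality: convexity of denominators -/
lemma delta_convex {t t' : ℚ} (hq : IsMinimalUnimodChain q n t t')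
    (i : ℕ) (h : i + 2 ≤ n) :
    ((q i).den : ℤ) - 2 * ((q (i+1)).den : ℤ) + ((q (i+2)).den : ℤ) ≥ 0 := by
  obtain ⟨⟨h0, hn, hlt, hdet⟩, hmin⟩ := hq
  have hd1 := hdet i (by omega)
  have hd2 := hdet (i+1) (by omega)
  rw [show i+1+1 = i+2 from rfl] at hd2
  set k : ℤ := dt (q i) (q (i+2)) with hk
  set a : ℤ := (q (i+2)).num + (q i).num - k * (q (i+1)).num with ha
  set b : ℤ := ((q (i+2)).den : ℤ) + ((q i).den : ℤ) - k * ((q (i+1)).den : ℤ) with hb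
  have hz : a * ((q (i+1)).den : ℤ) - b * (q (i+1)).num = 0 := by
    rw [ha, hb]
    linear_combination hd1 - hd2
  obtain ⟨j, hj1, hj2⟩ := smul_of_dt_zero (q (i+1)) a b hz
  have hjz : j = 0 := by
    have hcalc : (q i).num * b - a * ((q i).den : ℤ) = 0 := by
      rw [ha, hb, hk]
      unfold dt
      linear_combination (-((q i).num * ((q (i+2)).den:ℤ) - (q (i+2)).num * ((q i).den:ℤ))) * hd1
    rw [hj1, hj2] at hcalc
    have : j * ((q i).num * ((q (i+1)).den:ℤ) - (q (i+1)).num * ((q i).den:ℤ)) = 0 := by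
      linear_combination hcalc
    rw [hd1] at this
    omega
  subst hjz
  simp only [zero_mul] at hj1 hj2
  -- now v_{i+2} = k v_{i+1} - v_i componentwise
  have hnum : (q (i+2)).num = k * (q (i+1)).num - (q i).num := by
    rw [ha] at hj1; linarith
  have hden : ((q (i+2)).den : ℤ) = k * ((q (i+1)).den : ℤ) - ((q i).den : ℤ) := by
    rw [hb] at hj2; linarith
  have hdp : (0:ℤ) < ((q (i+1)).den : ℤ) := mod_cast (q (i+1)).den_pos
  have hdp0 : (0:ℤ) < ((q i).den : ℤ) := mod_cast (q i).den_pos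
  have hdp2 : (0:ℤ) < ((q (i+2)).den : ℤ) := mod_cast (q (i+2)).den_pos
  have hk1 : 1 ≤ k := by
    by_contra hcon
    push_neg at hcon
    have : k ≤ 0 := by omega
    have := mul_nonpos_of_nonpos_of_nonneg this hdp.le
    linarith
  have hk2 : 2 ≤ k := by
    rcases eq_or_lt_of_le hk1 with h' | h'
    · exfalso
      rw [← h'] at hnum hden
      simp only [one_mul] at hnum hden
      apply hmin (i+1) (by omega) (by omega)
      constructor
      · simp only [Nat.add_sub_cancel, show i+1+1 = i+2 from rfl]
        omega
      · have : ((q (i+1)).den : ℤ) = ((q i).den : ℤ) + ((q (i+2)).den : ℤ) := by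
          omega
        simp only [Nat.add_sub_cancel, show i+1+1 = i+2 from rfl]
        exact_mod_cast this
    · omega
  nlinarith [mul_nonneg (by linarith : (0:ℤ) ≤ k - 2) hdp.le]


/-- differences of denominators are monotone along a minimal chain -/
lemma delta_mono {t t' : ℚ} (hq : IsMinimalUnimodChain q n t t') :
    ∀ a b, a ≤ b → b + 1 ≤ n →
      ((q (a+1)).den : ℤ) - ((q a).den : ℤ) ≤ ((q (b+1)).den : ℤ) - ((q b).den : ℤ) := by
  intro a b hab hbn
  induction b with
  | zero =>
    have : a = 0 := by omega
    subst this
    exact le_rfl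
  | succ b ih =>
    rcases Nat.lt_or_ge a (b+1) with h' | h'
    · have h1 := ih (by omega) (by omega)
      have h2 := delta_convex q n hq b (by omega)
      rw [show b+1+1 = b+2 from rfl]
      omega
    · have : a = b + 1 := by omega
      subst this
      exact le_rfl

end Chains

/-- Disjointness of denominators along the two parent-chains of `t` and `1 - t`. -/
lemma disjointD :
    ∀ d : ℕ, ∀ t : ℚ, t.den = d →
    ∀ (α β : ℕ → ℚ) (i j : ℕ),
    α 0 = t → β 0 = 1 - t →
    (∀ k, k < i → dt (α k) (α (k+1)) = 1 ∧ (α (k+1)).den < (α k).den) →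
    (∀ k, k < j → dt (β k) (β (k+1)) = 1 ∧ (β (k+1)).den < (β k).den) →
    1 ≤ i → 1 ≤ j → 2 ≤ (α i).den → 2 ≤ (β j).den →
    (α i).den ≠ (β j).den := by
  intro d
  induction d using Nat.strong_induction_on with
  | _ d IH =>
  intro t ht α β i j hα0 hβ0 hαs hβs hi hj hαden hβden
  have hαmono : ∀ a b, a ≤ b → b ≤ i → (α b).den ≤ (α a).den :=
    den_anti α i (fun k hk => (hαs k hk).2)
  have hβmono : ∀ a b, a ≤ b → b ≤ j → (β b).den ≤ (β a).den :=
    den_anti β j (fun k hk => (hβs k hk).2)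
  have hα1 := hαs 0 (by omega)
  have hβ1 := hβs 0 (by omega)
  have hdtL : dt t (α 1) = 1 := by rw [← hα0]; exact hα1.1
  have hdLlt : (α 1).den < t.den := by rw [← hα0]; exact hα1.2
  have hdtB : dt (1 - t) (β 1) = 1 := by rw [← hβ0]; exact hβ1.1
  have hdBlt : (β 1).den < t.den := by
    have h' := hβ1.2
    rw [hβ0, refl_den t] at h'
    exact h'
  have hUden : (1 - β 1).den = (β 1).den := refl_den (β 1)
  have hdtU : dt (1 - β 1) t = 1 := by
    have h' : dt (1 - β 1) (1 - (1 - t)) = dt (1 - t) (β 1) := dt_refl (β 1) (1 - t)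
    rw [refl_refl t] at h'
    rw [h', hdtB]
  obtain ⟨hUnum, hUdenZ, hdUL⟩ := mediant hdtL hdtU hdLlt (by omega)
  have hLd2 : 2 ≤ (α 1).den := le_trans hαden (hαmono 1 i hi le_rfl)
  rcases lt_trichotomy (α 1).den (β 1).den with hc | hc | hc
  · -- β-side deeper : recurse at β 1
    rcases Nat.lt_or_ge j 2 with hj1 | hj2
    · have hj1' : j = 1 := by omega
      subst hj1'
      have h2 : (α i).den ≤ (α 1).den := hαmono 1 i hi le_rfl
      omega
    · have hkey := IH (β 1).den (by omega) (β 1) rfl (fun k => β (k+1))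
        (fun k => if k = 0 then 1 - β 1 else α k) (j-1) i
        rfl (by simp)
        (fun k hk => hβs (k+1) (by omega))
        (fun k hk => by
          rcases Nat.eq_zero_or_pos k with h0 | h0
          · subst h0
            simp only [zero_add, if_pos rfl, if_neg (by omega : ¬ (1:ℕ) = 0)]
            refine ⟨hdUL, ?_⟩
            simpa [hUden] using hc
          · simp only [if_neg (by omega : ¬ k = 0), if_neg (by omega : ¬ k + 1 = 0)]
            exact hαs k hk)
        (by omega) hi
        (by show 2 ≤ (β (j - 1 + 1)).den
            rw [show j - 1 + 1 = j from by omega]; exact hβden)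
        (by show 2 ≤ (if i = 0 then 1 - β 1 else α i).den
            rw [if_neg (by omega : ¬ i = 0)]; exact hαden)
      intro hcon
      apply hkey
      show (β (j - 1 + 1)).den = (if i = 0 then 1 - β 1 else α i).den
      rw [show j - 1 + 1 = j from by omega, if_neg (by omega : ¬ i = 0)]
      exact hcon.symm
  · -- equal dens: contradiction
    exfalso
    have h2d : (t.den : ℤ) = 2 * ((α 1).den : ℤ) := by
      have h' : ((1 - β 1).den : ℤ) = ((β 1).den : ℤ) := by exact_mod_cast hUden
      omega
    have hdvd : ((α 1).den : ℤ) * (t.num - 2 * (α 1).num) = 1 := by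
      unfold dt at hdtL
      rw [h2d] at hdtL
      linear_combination hdtL
    have hdvd' : ((α 1).den : ℤ) ∣ 1 := ⟨_, hdvd.symm⟩
    have := Int.le_of_dvd one_pos hdvd'
    omega
  · -- α-side deeper : recurse at α 1
    rcases Nat.lt_or_ge i 2 with hi1 | hi2
    · have hi1' : i = 1 := by omega
      subst hi1'
      have h2 : (β j).den ≤ (β 1).den := hβmono 1 j hj le_rfl
      omega
    · have hβ1U : (1 : ℚ) - (1 - β 1) = β 1 := by ring
      have hjunc : dt (1 - α 1) (β 1) = 1 := by
        have h' : dt (1 - α 1) (1 - (1 - β 1)) = dt (1 - β 1) (α 1) := dt_refl (α 1) (1 - β 1)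
        rw [hβ1U] at h'
        rw [h', hdUL]
      have hkey := IH (α 1).den (by omega) (α 1) rfl (fun k => α (k+1))
        (fun k => if k = 0 then 1 - α 1 else β k) (i-1) j
        rfl (by simp)
        (fun k hk => hαs (k+1) (by omega))
        (fun k hk => by
          rcases Nat.eq_zero_or_pos k with h0 | h0
          · subst h0
            simp only [zero_add, if_pos rfl, if_neg (by omega : ¬ (1:ℕ) = 0)]
            refine ⟨hjunc, ?_⟩
            simpa [refl_den (α 1)] using hc
          · simp only [if_neg (by omega : ¬ k = 0), if_neg (by omega : ¬ k + 1 = 0)]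
            exact hβs k hk)
        (by omega) hj
        (by show 2 ≤ (α (i - 1 + 1)).den
            rw [show i - 1 + 1 = i from by omega]; exact hαden)
        (by show 2 ≤ (if j = 0 then 1 - α 1 else β j).den
            rw [if_neg (by omega : ¬ j = 0)]; exact hβden)
      intro hcon
      apply hkey
      show (α (i - 1 + 1)).den = (if j = 0 then 1 - α 1 else β j).den
      rw [show i - 1 + 1 = i from by omega, if_neg (by omega : ¬ j = 0)]
      exact hcon

lemma neg_one_num : ((-1 : ℚ)).num = -1 := by norm_num
lemma neg_one_den : ((-1 : ℚ)).den = 1 := by norm_num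
lemma zero_num : ((0 : ℚ)).num = 0 := rfl
lemma zero_den : ((0 : ℚ)).den = 1 := rfl

/-- structure of a minimal unimodular chain from `t ∈ (0,1)` down to `-1` -/
lemma chain_to_neg_one (q : ℕ → ℚ) (n : ℕ) (t : ℚ) (ht0 : 0 < t) (ht1 : t < 1)
    (hq : IsMinimalUnimodChain q n t (-1)) :
    2 ≤ n ∧ q (n-1) = 0 ∧ (∀ i, i ≤ n - 2 → 2 ≤ (q i).den) ∧
      (∀ k, k < n - 1 → (q (k+1)).den < (q k).den) := by
  obtain ⟨⟨h0, hn, hlt, hdet⟩, hmin⟩ := hq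
  have htden : 2 ≤ t.den := two_le_den ht0 ht1
  have hn0 : n ≠ 0 := by
    intro h
    subst h
    rw [h0] at hn
    rw [hn] at ht0
    norm_num at ht0
  have hn2 : 2 ≤ n := by
    rcases Nat.lt_or_ge n 2 with h | h
    · exfalso
      have hn1 : n = 1 := by omega
      subst hn1
      have hd := hdet 0 (by omega)
      rw [h0, hn, neg_one_num, neg_one_den] at hd
      have h1 : 1 ≤ t.num := Rat.num_pos.mpr ht0
      have h2 : (2:ℤ) ≤ (t.den:ℤ) := by exact_mod_cast htden
      push_cast at hd
      omega
    · exact h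
  -- no step goes from positive to negative
  have hcross : ∀ k, k < n → 0 < q k → ¬ (q (k+1) < 0) := by
    intro k hk hpos hneg
    have hd := hdet k hk
    have h1 : 1 ≤ (q k).num := Rat.num_pos.mpr hpos
    have h2 : (q (k+1)).num ≤ -1 := by
      have := Rat.num_neg.mpr hneg
      omega
    have hd1 : (1:ℤ) ≤ ((q k).den : ℤ) := by exact_mod_cast (q k).den_pos
    have hd2 : (1:ℤ) ≤ ((q (k+1)).den : ℤ) := by exact_mod_cast (q (k+1)).den_pos
    have A : ((q (k+1)).den:ℤ) ≤ (q k).num * ((q (k+1)).den:ℤ) :=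
      le_mul_of_one_le_left (by omega) h1
    have B : ((q k).den:ℤ) ≤ (-(q (k+1)).num) * ((q k).den:ℤ) :=
      le_mul_of_one_le_left (by omega) (by omega)
    nlinarith
  -- existence of a zero
  have hzero : ∃ i, i ≤ n ∧ q i = 0 := by
    classical
    set P : ℕ → Prop := fun i => 0 < q i with hP
    have hP0 : P 0 := by rw [hP]; simpa [h0] using ht0
    set i₀ := Nat.findGreatest P n with hi₀
    have hPi₀ : P i₀ := Nat.findGreatest_spec (Nat.zero_le n) hP0
    have hi₀n : i₀ ≤ n := Nat.findGreatest_le n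
    have hi₀lt : i₀ < n := by
      rcases Nat.lt_or_ge i₀ n with h | h
      · exact h
      · exfalso
        have : i₀ = n := by omega
        rw [this] at hPi₀
        rw [hP] at hPi₀
        rw [hn] at hPi₀
        norm_num at hPi₀
    have hnot : ¬ P (i₀ + 1) := Nat.findGreatest_is_greatest (Nat.lt_succ_self _) (by omega)
    have hle : q (i₀ + 1) ≤ 0 := by
      rw [hP] at hnot
      exact le_of_not_gt hnot
    rcases eq_or_lt_of_le hle with h | h
    · exact ⟨i₀ + 1, by omega, h⟩
    · exact absurd h (hcross i₀ hi₀lt hPi₀)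
  obtain ⟨z, hzn, hz⟩ := hzero
  have hz1 : 1 ≤ z := by
    rcases Nat.eq_zero_or_pos z with h | h
    · exfalso; rw [h, h0] at hz; rw [hz] at ht0; norm_num at ht0
    · exact h
  have hzltn : z < n := by
    rcases eq_or_lt_of_le hzn with h | h
    · exfalso; rw [h, hn] at hz; norm_num at hz
    · exact h
  -- the zero must be at position n - 1
  have hzpos : z = n - 1 := by
    by_contra hcon
    have hz2 : z + 1 < n := by omega
    have hd := hdet z (by omega)
    rw [hz, zero_num, zero_den] at hd
    have hnum1 : (q (z+1)).num = -1 := by push_cast at hd; omega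
    have hygt : -1 < q (z+1) := by
      have := chain_anti q n hlt (z+1) n hz2 le_rfl
      rw [hn] at this
      exact this
    have hyden : 2 ≤ (q (z+1)).den := by
      by_contra h'
      have hd1 : (q (z+1)).den = 1 := by have := (q (z+1)).den_pos; omega
      have := Rat.coe_int_num_of_den_eq_one hd1
      rw [hnum1] at this
      rw [← this] at hygt
      norm_num at hygt
    have hmono := delta_mono q n ⟨⟨h0, hn, hlt, hdet⟩, hmin⟩ z (n-1) (by omega)
      (by omega)
    rw [show n - 1 + 1 = n from by omega] at hmono
    rw [hz, zero_den, hn, neg_one_den] at hmono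
    have : (2:ℤ) ≤ ((q (z+1)).den : ℤ) := by exact_mod_cast hyden
    have hd1 : (1:ℤ) ≤ ((q (n-1)).den : ℤ) := by exact_mod_cast (q (n-1)).den_pos
    push_cast at hmono
    omega
  subst hzpos
  have hge2 : ∀ i, i ≤ n - 2 → 2 ≤ (q i).den := by
    intro i hi
    by_contra h'
    have hd1 : (q i).den = 1 := by have := (q i).den_pos; omega
    rcases Nat.eq_zero_or_pos i with h | h
    · rw [h, h0] at hd1; omega
    · have hint := Rat.coe_int_num_of_den_eq_one hd1
      have hlt1 : q i < 1 := by
        have := chain_anti q n hlt 0 i (by omega) (by omega)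
        rw [h0] at this
        linarith
      have hgt1 : -1 < q i := by
        have := chain_anti q n hlt i n (by omega) le_rfl
        rw [hn] at this
        linarith
      rw [← hint] at hlt1 hgt1
      have e1 : (q i).num < 1 := by exact_mod_cast hlt1
      have e2 : -1 < (q i).num := by exact_mod_cast hgt1
      have : (q i).num = 0 := by omega
      have hqi : q i = 0 := by rw [← hint, this]; norm_num
      have := chain_anti q n hlt i (n-1) (by omega) (by omega)
      rw [hz, hqi] at this
      exact lt_irrefl _ this
  refine ⟨hn2, hz, hge2, ?_⟩
  · -- strictly decreasing dens before position n-1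
    intro k hk
    have hk2 : 2 ≤ (q k).den := hge2 k (by omega)
    rcases Nat.lt_or_ge ((q (k+1)).den) ((q k).den) with h | h
    · exact h
    · exfalso
      rcases eq_or_lt_of_le h with h' | h'
      · have := den_eq_one_of_dt (x := q k) (y := q (k+1)) (hdet k (by omega)) h'
        omega
      · have hmono := delta_mono q n ⟨⟨h0, hn, hlt, hdet⟩, hmin⟩ k (n-1) (by omega) (by omega)
        rw [show n - 1 + 1 = n from by omega] at hmono
        rw [hn, neg_one_den] at hmono
        have e1 : ((q k).den:ℤ) < ((q (k+1)).den:ℤ) := by exact_mod_cast h'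
        have hd1 : (1:ℤ) ≤ ((q (n-1)).den : ℤ) := by exact_mod_cast (q (n-1)).den_pos
        omega

end UCaux


open UCaux

/-- Theorem 6.6 of the paper: comparison of the denominators of the minimal
unimodular chain from `s₁` to `s₂` with those of the chains from `s₁` to `-1`
and from `1 - s₂` to `-1`. -/
theorem stmt_0
    (s₁ s₂ : ℚ) (hs₂pos : 0 < s₂) (hs : s₂ < s₁) (hs₁lt : s₁ < 1)
    (q : ℕ → ℚ) (n : ℕ) (hq : IsMinimalUnimodChain q n s₁ s₂)
    (q₁ : ℕ → ℚ) (n₁ : ℕ) (hq₁ : IsMinimalUnimodChain q₁ n₁ s₁ (-1))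
    (q₂ : ℕ → ℚ) (n₂ : ℕ) (hq₂ : IsMinimalUnimodChain q₂ n₂ (1 - s₂) (-1))
    (l₁ l₂ : ℕ) (hl₁ : l₁ < max 1 (n₁ - 1)) (hl₂ : l₂ < max 1 (n₂ - 1))
    (heq : (q₁ l₁).den = (q₂ l₂).den)
    (hmax : ∀ l₁' l₂', l₁' < max 1 (n₁ - 1) → l₂' < max 1 (n₂ - 1) →
      (q₁ l₁').den = (q₂ l₂').den → l₁' ≤ l₁ ∧ l₂' ≤ l₂) :
    (∀ i, 1 ≤ i → i ≤ l₁ → (q i).den = (q₁ i).den) ∧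
    (∀ i, 1 ≤ i → i ≤ l₂ → (q (n - i)).den = (q₂ i).den) := by
  classical
  have hs₁pos : 0 < s₁ := lt_trans hs₂pos hs
  have h0 : q 0 = s₁ := hq.1.1
  have hn : q n = s₂ := hq.1.2.1
  have hlt : ∀ i, i < n → q (i+1) < q i := hq.1.2.2.1
  have hdet : ∀ i, i < n →
      (q i).num * ((q (i + 1)).den : ℤ) - (q (i + 1)).num * ((q i).den : ℤ) = 1 :=
    hq.1.2.2.2
  have h10 : q₁ 0 = s₁ := hq₁.1.1
  have h1det : ∀ i, i < n₁ →
      (q₁ i).num * ((q₁ (i + 1)).den : ℤ) - (q₁ (i + 1)).num * ((q₁ i).den : ℤ) = 1 :=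
    hq₁.1.2.2.2
  have h20 : q₂ 0 = 1 - s₂ := hq₂.1.1
  have h2det : ∀ i, i < n₂ →
      (q₂ i).num * ((q₂ (i + 1)).den : ℤ) - (q₂ (i + 1)).num * ((q₂ i).den : ℤ) = 1 :=
    hq₂.1.2.2.2
  -- structure of the two chains to -1
  obtain ⟨hn₁2, h1z, h1ge2, h1dec⟩ := chain_to_neg_one q₁ n₁ s₁ hs₁pos hs₁lt hq₁
  obtain ⟨hn₂2, h2z, h2ge2, h2dec⟩ :=
    chain_to_neg_one q₂ n₂ (1 - s₂) (by linarith) (by linarith) hq₂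
  -- basic facts about q
  have hnpos : n ≠ 0 := by
    intro h
    subst h
    rw [h0] at hn
    exact absurd hn (by linarith)
  have hval : ∀ i, i ≤ n → s₂ ≤ q i ∧ q i ≤ s₁ := by
    intro i hi
    constructor
    · rcases eq_or_lt_of_le hi with h | h
      · rw [h, hn]
      · have := chain_anti q n hlt i n h le_rfl
        rw [hn] at this
        linarith
    · rcases Nat.eq_zero_or_pos i with h | h
      · rw [h, h0]
      · have := chain_anti q n hlt 0 i h hi
        rw [h0] at this
        linarith
  have hden2 : ∀ i, i ≤ n → 2 ≤ (q i).den := by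
    intro i hi
    obtain ⟨ha, hb⟩ := hval i hi
    exact two_le_den (by linarith) (by linarith)
  have hne : ∀ k, k < n → (q (k+1)).den ≠ (q k).den := by
    intro k hk hcon
    have := den_eq_one_of_dt (x := q k) (y := q (k+1)) (hdet k hk) hcon.symm
    have := hden2 k (by omega)
    omega
  -- the turning point c of the denominators of q
  have hC : ∃ c, c ≤ n ∧ (∀ k, k < c → (q (k+1)).den < (q k).den) ∧
      (∀ k, c ≤ k → k < n → (q k).den < (q (k+1)).den) := by
    by_cases hex : ∃ i, i < n ∧ (q i).den < (q (i+1)).den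
    · refine ⟨Nat.find hex, (Nat.find_spec hex).1.le, ?_, ?_⟩
      · intro k hk
        have hmin := Nat.find_min hex hk
        push_neg at hmin
        have hkn : k < n := lt_of_lt_of_le hk (Nat.find_spec hex).1.le
        have := hmin hkn
        have := hne k hkn
        omega
      · intro k hck hkn
        have hspec := Nat.find_spec hex
        have hmono := delta_mono q n hq (Nat.find hex) k hck (by omega)
        have e1 : ((q (Nat.find hex)).den : ℤ) < ((q (Nat.find hex + 1)).den : ℤ) := by
          exact_mod_cast hspec.2
        have : ((q k).den : ℤ) < ((q (k+1)).den : ℤ) := by omega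
        exact_mod_cast this
    · push_neg at hex
      refine ⟨n, le_rfl, ?_, ?_⟩
      · intro k hk
        have := hex k hk
        have := hne k hk
        omega
      · intro k hck hkn
        omega
  obtain ⟨c, hcn, hcdec, hcinc⟩ := hC
  -- matching of the head of q with q₁
  have match1 : ∀ i, i ≤ c → q i = q₁ i ∧ i ≤ n₁ - 2 := by
    intro i hi
    induction i with
    | zero => exact ⟨by rw [h0, h10], by omega⟩
    | succ i ih =>
      obtain ⟨hqi, hile⟩ := ih (by omega)
      have hstepq : dt (q i) (q (i+1)) = 1 := hdet i (by omega)
      have hdecq : (q (i+1)).den < (q i).den := hcdec i (by omega)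
      have hstep1 : dt (q i) (q₁ (i+1)) = 1 := by
        rw [hqi]; exact h1det i (by omega)
      have hdec1 : (q₁ (i+1)).den < (q i).den := by
        rw [hqi]; exact h1dec i (by omega)
      have heqq : q (i+1) = q₁ (i+1) :=
        unique_parent hstepq hstep1 hdecq hdec1
      refine ⟨heqq, ?_⟩
      have hd2 : 2 ≤ (q₁ (i+1)).den := by
        rw [← heqq]; exact hden2 (i+1) (by omega)
      by_contra hcon
      have : i + 1 = n₁ - 1 := by omega
      rw [this, h1z] at hd2
      simp [zero_den] at hd2
  -- matching of the tail of q with q₂ (reflected)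
  have match2 : ∀ j, j ≤ n - c → 1 - q (n - j) = q₂ j ∧ j ≤ n₂ - 2 := by
    intro j hj
    induction j with
    | zero => exact ⟨by rw [Nat.sub_zero, hn, h20], by omega⟩
    | succ j ih =>
      obtain ⟨hqj, hjle⟩ := ih (by omega)
      have ha1 : n - j = (n - (j+1)) + 1 := by omega
      have hstepq : dt (q (n - (j+1))) (q (n - j)) = 1 := by
        rw [ha1]
        exact hdet (n - (j+1)) (by omega)
      have hrefl : dt (1 - q (n - j)) (1 - q (n - (j+1))) = 1 := by
        rw [dt_refl (q (n - j)) (q (n - (j+1)))]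
        exact hstepq
      have hstep2 : dt (q₂ j) (1 - q (n - (j+1))) = 1 := by
        rw [← hqj]; exact hrefl
      have hdenlt : (q (n - (j+1))).den < (q (n - j)).den := by
        rw [ha1]
        exact hcinc (n - (j+1)) (by omega) (by omega)
      have hdecR : (1 - q (n - (j+1))).den < (q₂ j).den := by
        rw [← hqj, refl_den, refl_den]
        exact hdenlt
      have hstepq2 : dt (q₂ j) (q₂ (j+1)) = 1 := h2det j (by omega)
      have hdecq2 : (q₂ (j+1)).den < (q₂ j).den := h2dec j (by omega)
      have heqq : q₂ (j+1) = 1 - q (n - (j+1)) :=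
        unique_parent hstepq2 hstep2 hdecq2 hdecR
      refine ⟨heqq.symm, ?_⟩
      have hd2 : 2 ≤ (q₂ (j+1)).den := by
        rw [heqq, refl_den]
        exact hden2 (n - (j+1)) (by omega)
      by_contra hcon
      have : j + 1 = n₂ - 1 := by omega
      rw [this, h2z] at hd2
      simp [zero_den] at hd2
  have hcn₁ : c ≤ n₁ - 2 := (match1 c le_rfl).2
  have hcn₂ : n - c ≤ n₂ - 2 := (match2 (n - c) le_rfl).2
  have hmax₁ : max 1 (n₁ - 1) = n₁ - 1 := max_eq_right (by omega)
  have hmax₂ : max 1 (n₂ - 1) = n₂ - 1 := max_eq_right (by omega)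
  -- (c, n-c) is an admissible pair, hence c ≤ l₁ and n - c ≤ l₂
  have hdenc : (q₁ c).den = (q₂ (n - c)).den := by
    have e1 : (q₁ c).den = (q c).den := by rw [(match1 c le_rfl).1]
    have e2 : 1 - q (n - (n - c)) = q₂ (n - c) := (match2 (n - c) le_rfl).1
    rw [show n - (n - c) = c from by omega] at e2
    rw [e1, ← e2, refl_den]
  obtain ⟨hcl₁, hcl₂⟩ := hmax c (n - c) (by omega) (by omega) hdenc
  have hl₁le : l₁ ≤ n₁ - 2 := by omega
  have hl₂le : l₂ ≤ n₂ - 2 := by omega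
  -- l₁ cannot exceed c
  have hnotlt : ¬ (c < l₁) := by
    intro hlt1
    have hd1 : (q₁ l₁).den < (q₁ c).den :=
      den_anti_strict q₁ (n₁ - 1) h1dec c l₁ hlt1 (by omega)
    have hlt2 : n - c < l₂ := by
      by_contra hcon
      push_neg at hcon
      have := den_anti q₂ (n₂ - 1) h2dec l₂ (n - c) hcon (by omega)
      omega
    have hdis := disjointD (q c).den (q c) rfl
      (fun k => q₁ (c + k)) (fun k => q₂ ((n - c) + k)) (l₁ - c) (l₂ - (n - c))
      (by show q₁ (c + 0) = q c
          rw [Nat.add_zero, (match1 c le_rfl).1])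
      (by show q₂ ((n - c) + 0) = 1 - q c
          rw [Nat.add_zero]
          have e2 := (match2 (n - c) le_rfl).1
          rw [show n - (n - c) = c from by omega] at e2
          exact e2.symm)
      (fun k hk => ⟨h1det (c + k) (by omega), h1dec (c + k) (by omega)⟩)
      (fun k hk => ⟨h2det ((n - c) + k) (by omega), h2dec ((n - c) + k) (by omega)⟩)
      (by omega) (by omega)
      (by show 2 ≤ (q₁ (c + (l₁ - c))).den
          rw [show c + (l₁ - c) = l₁ from by omega]
          exact h1ge2 l₁ hl₁le)
      (by show 2 ≤ (q₂ ((n - c) + (l₂ - (n - c)))).den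
          rw [show (n - c) + (l₂ - (n - c)) = l₂ from by omega]
          exact h2ge2 l₂ hl₂le)
    apply hdis
    show (q₁ (c + (l₁ - c))).den = (q₂ ((n - c) + (l₂ - (n - c)))).den
    rw [show c + (l₁ - c) = l₁ from by omega,
        show (n - c) + (l₂ - (n - c)) = l₂ from by omega]
    exact heq
  have hl₁c : l₁ = c := by omega
  have hl₂c : l₂ = n - c := by
    by_contra hcon
    have hlt2 : n - c < l₂ := by omega
    have hd1 : (q₂ l₂).den < (q₂ (n - c)).den :=
      den_anti_strict q₂ (n₂ - 1) h2dec (n - c) l₂ hlt2 (by omega)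
    have : (q₁ l₁).den < (q₁ c).den := by omega
    have : l₁ ≠ c := by
      intro h
      rw [h] at this
      omega
    omega
  subst hl₁c
  subst hl₂c
  constructor
  · intro i h1i hil
    rw [(match1 i (by omega)).1]
  · intro i h1i hil
    have := (match2 i (by omega)).1
    rw [← this, refl_den]
end

section
/- Let s₁ and s₂ be rationals with 0 < s₂ < s₁ < 1, and let δ be the minimal denominator (in lowest terms) of a rational lying in the closed interval [s₂, s₁]. Let d⁽¹⁾₀, …, d⁽¹⁾_{λ₁+1} be the denominators of the terms of the minimal unimodular chain from s₁ to −1, and let d⁽²⁾₀, …, d⁽²⁾_{λ₂+1} be the denominators of the terms of the minimal unimodular chain from 1 − s₂ to −1. Then there exist indices 0 ≤ l₁ < λ₁ + 1 and 0 ≤ l₂ < λ₂ + 1 such that d⁽¹⁾_{l₁} = δ = d⁽²⁾_{l₂}. -/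
private lemma num_den_lt {a b : ℚ} (h : a < b) :
    a.num * (b.den : ℤ) + 1 ≤ b.num * (a.den : ℤ) := by
  have ha : (0:ℚ) < a.den := by exact_mod_cast a.pos
  have hb : (0:ℚ) < b.den := by exact_mod_cast b.pos
  have h' : (a.num : ℚ) / a.den < (b.num : ℚ) / b.den := by
    rw [Rat.num_div_den, Rat.num_div_den]; exact h
  rw [div_lt_div_iff₀ ha hb] at h'
  have : a.num * (b.den : ℤ) < b.num * (a.den : ℤ) := by exact_mod_cast h'
  omega

/-- Farey: a rational strictly between two unimodular neighbours has
denominator at least the sum of the denominators. -/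
private lemma farey {a c r : ℚ} (h : a.num * (c.den : ℤ) - c.num * (a.den : ℤ) = 1)
    (h1 : c < r) (h2 : r < a) : (a.den : ℤ) + (c.den : ℤ) ≤ (r.den : ℤ) := by
  have hA := num_den_lt h2
  have hC := num_den_lt h1
  have ha : 0 < (a.den : ℤ) := by exact_mod_cast a.pos
  have hc : 0 < (c.den : ℤ) := by exact_mod_cast c.pos
  have key : (r.den : ℤ) =
      (c.den : ℤ) * (a.num * r.den - r.num * a.den)
      + (a.den : ℤ) * (r.num * c.den - c.num * r.den) := by
    linear_combination (-(r.den : ℤ)) * h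
  nlinarith [mul_le_mul_of_nonneg_left (by linarith : (1:ℤ) ≤ a.num * r.den - r.num * a.den) hc.le,
    mul_le_mul_of_nonneg_left (by linarith : (1:ℤ) ≤ r.num * c.den - c.num * r.den) ha.le]

private lemma chain_le_zero {q : ℕ → ℚ} {n : ℕ}
    (hdec : ∀ i, i < n → q (i + 1) < q i) : ∀ i, i ≤ n → q i ≤ q 0 := by
  intro i hi
  induction i with
  | zero => exact le_rfl
  | succ k ih =>
    have h1 := hdec k (by omega)
    have h2 := ih (by omega)
    linarith

private lemma den_one_sub (x : ℚ) : (1 - x).den = x.den := by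
  have h1 : (1 - x).den ∣ x.den := by
    have := Rat.add_den_dvd 1 (-x)
    simpa [Rat.den_neg_eq_den, show (1:ℚ) + -x = 1 - x by ring] using this
  have h2 : x.den ∣ (1 - x).den := by
    have := Rat.add_den_dvd 1 (-(1 - x))
    rw [show (1:ℚ) + -(1 - x) = x from by ring, Rat.den_neg_eq_den] at this
    simpa using this
  exact Nat.dvd_antisymm h1 h2

/-- Key lemma: if `r` lies in `(t', t]` and has the minimal denominator `δ`
among rationals in `[r, t]`, then `δ` occurs as a denominator of a term
(other than the last) of any unimodular chain from `t` to `t'`. -/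
private lemma key_lemma {q : ℕ → ℚ} {n : ℕ} {t t' : ℚ} (h : IsUnimodChain q n t t')
    {δ : ℕ} {r : ℚ} (hr1 : t' < r) (hr2 : r ≤ t) (hden : r.den = δ)
    (hmin : ∀ x : ℚ, r ≤ x → x ≤ t → δ ≤ x.den) :
    ∃ l, l < n ∧ (q l).den = δ := by
  obtain ⟨h0, hn, hdec, huni⟩ := h
  -- find the least j with q j < r
  have hex : ∃ j, j ≤ n ∧ q j < r := ⟨n, le_rfl, hn ▸ hr1⟩
  classical
  have hexj : ∃ j, q j < r ∧ j ≤ n := ⟨n, hn ▸ hr1, le_rfl⟩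
  let j := Nat.find hexj
  have hj : q j < r ∧ j ≤ n := Nat.find_spec hexj
  have hj0 : j ≠ 0 := by
    intro h0'
    have := hj.1
    rw [h0', h0] at this
    linarith
  have hjlt : ∀ k < j, ¬ (q k < r ∧ k ≤ n) := fun k hk => Nat.find_min hexj hk
  set i := j - 1 with hi
  have hij : j = i + 1 := by omega
  have hile : i < n := by omega
  have hqi : r ≤ q i := by
    by_contra hcon
    exact hjlt i (by omega) ⟨by linarith, by omega⟩
  rcases eq_or_lt_of_le hqi with heq | hlt
  · exact ⟨i, hile, by rw [← heq, hden]⟩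
  · exfalso
    have hqi1 : q (i + 1) < r := hij ▸ hj.1
    have hf := farey (huni i hile) hqi1 hlt
    have hqit : q i ≤ t := h0 ▸ chain_le_zero hdec i (by omega)
    have hmin' := hmin (q i) (le_of_lt hlt) hqit
    have h1 : (1 : ℤ) ≤ (q (i+1)).den := by exact_mod_cast (q (i+1)).pos
    have : (δ : ℤ) ≤ (q i).den := by exact_mod_cast hmin'
    rw [hden] at hf
    omega

/-- Lemma 6.5 of the paper: the minimal denominator `δ` of a rational in
`[s₂, s₁]` occurs among the denominators of the minimal unimodular chains
from `s₁` to `-1` and from `1 - s₂` to `-1` (excluding the last term). -/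
theorem stmt_1
    (s₁ s₂ : ℚ) (hs₂pos : 0 < s₂) (hs : s₂ < s₁) (hs₁lt : s₁ < 1)
    (δ : ℕ)
    (hδmem : ∃ r : ℚ, s₂ ≤ r ∧ r ≤ s₁ ∧ r.den = δ)
    (hδmin : ∀ r : ℚ, s₂ ≤ r → r ≤ s₁ → δ ≤ r.den)
    (q₁ : ℕ → ℚ) (n₁ : ℕ) (hq₁ : IsMinimalUnimodChain q₁ n₁ s₁ (-1))
    (q₂ : ℕ → ℚ) (n₂ : ℕ) (hq₂ : IsMinimalUnimodChain q₂ n₂ (1 - s₂) (-1)) :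
    ∃ l₁ l₂, l₁ < n₁ ∧ l₂ < n₂ ∧ (q₁ l₁).den = δ ∧ (q₂ l₂).den = δ := by
  obtain ⟨r, hr2, hr1, hden⟩ := hδmem
  obtain ⟨l₁, hl₁, hd₁⟩ := key_lemma hq₁.1 (by linarith : (-1 : ℚ) < r) hr1 hden
    (fun x hx1 hx2 => hδmin x (by linarith) hx2)
  obtain ⟨l₂, hl₂, hd₂⟩ := key_lemma hq₂.1 (by linarith : (-1 : ℚ) < 1 - r)
    (by linarith : 1 - r ≤ 1 - s₂) (by rw [den_one_sub, hden])
    (fun x hx1 hx2 => by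
      have := hδmin (1 - x) (by linarith) (by linarith)
      rwa [den_one_sub] at this)
  exact ⟨l₁, l₂, hl₁, hl₂, hd₁, hd₂⟩
end

section
/- Let t > t′ be rationals with [t′, t] ∩ ℤ = ∅, and let m/δ (in lowest terms) be the unique rational of minimal denominator in [t′, t]. Then m/δ occurs as a term of the minimal unimodular chain from t to t′; in particular, δ is the minimum of the denominators d₀, …, d_{λ+1} of the terms of that chain. -/
/-- Farey: a rational strictly between two unimodular neighbours has
denominator at least the sum of their denominators. -/
lemma farey_middle (a c r : ℚ) (h : a.num * (c.den : ℤ) - c.num * (a.den : ℤ) = 1)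
    (h1 : c < r) (h2 : r < a) : (a.den : ℤ) + (c.den : ℤ) ≤ (r.den : ℤ) := by
  rw [Rat.lt_iff] at h1 h2
  have hX : 1 ≤ a.num * (r.den : ℤ) - r.num * (a.den : ℤ) := by
    push_cast at h2 ⊢; omega
  have hY : 1 ≤ r.num * (c.den : ℤ) - c.num * (r.den : ℤ) := by
    push_cast at h1 ⊢; omega
  have had : (1 : ℤ) ≤ a.den := by exact_mod_cast a.pos
  have hcd : (1 : ℤ) ≤ c.den := by exact_mod_cast c.pos
  have key : (r.den : ℤ) = (c.den : ℤ) * (a.num * (r.den : ℤ) - r.num * (a.den : ℤ))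
      + (a.den : ℤ) * (r.num * (c.den : ℤ) - c.num * (r.den : ℤ)) := by
    have : (r.den : ℤ) * (a.num * (c.den : ℤ) - c.num * (a.den : ℤ)) = (r.den : ℤ) := by
      rw [h]; ring
    linarith [this.symm, (by ring : (r.den : ℤ) * (a.num * (c.den : ℤ) - c.num * (a.den : ℤ))
      = (c.den : ℤ) * (a.num * (r.den : ℤ) - r.num * (a.den : ℤ))
      + (a.den : ℤ) * (r.num * (c.den : ℤ) - c.num * (r.den : ℤ)))]
  nlinarith

/-- For rationals `t > t'` with `[t', t] ∩ ℤ = ∅`, the unique rational `r` of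
minimal denominator in `[t', t]` occurs as a term of the minimal unimodular
chain from `t` to `t'`; in particular its denominator is the minimum of the
denominators of the chain's terms. -/
theorem stmt_2
    (t t' : ℚ) (htt : t' < t)
    (hint : ∀ z : ℤ, ¬ (t' ≤ (z : ℚ) ∧ (z : ℚ) ≤ t))
    (r : ℚ) (hr₁ : t' ≤ r) (hr₂ : r ≤ t)
    (hrmin : ∀ r' : ℚ, t' ≤ r' → r' ≤ t → r.den ≤ r'.den)
    (q : ℕ → ℚ) (n : ℕ) (hq : IsMinimalUnimodChain q n t t') :
    (∃ i ≤ n, q i = r) ∧ ∀ i ≤ n, r.den ≤ (q i).den := by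
  obtain ⟨⟨h0, hn, hdec, haux⟩, _⟩ := hq
  -- antitonicity along the chain
  have key : ∀ j, j ≤ n → ∀ i, i ≤ j → q j ≤ q i := by
    intro j
    induction j with
    | zero => intro _ i hi; simp [Nat.le_zero.mp hi]
    | succ k ih =>
      intro hj i hi
      rcases Nat.lt_or_ge i (k + 1) with h | h
      · calc q (k + 1) ≤ q k := le_of_lt (hdec k (by omega))
          _ ≤ q i := ih (by omega) i (by omega)
      · have : i = k + 1 := le_antisymm hi h
        simp [this]
  have key0 : ∀ j, j ≤ 0 → ∀ i, i ≤ j → q j ≤ q i := by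
    intro j hj i hi
    have : j = 0 := Nat.le_zero.mp hj
    have : i = 0 := by omega
    simp_all
  have hub : ∀ i, i ≤ n → q i ≤ t := by
    intro i hi; rw [← h0]; exact key i hi 0 (Nat.zero_le _)
  have hlb : ∀ i, i ≤ n → t' ≤ q i := by
    intro i hi; rw [← hn]; exact key n le_rfl i hi
  have hden : ∀ i, i ≤ n → r.den ≤ (q i).den := by
    intro i hi; exact hrmin _ (hlb i hi) (hub i hi)
  refine ⟨?_, hden⟩
  -- largest index with r ≤ q i
  set P : ℕ → Prop := fun i => r ≤ q i with hP
  have hP0 : P 0 := by rw [hP]; simpa [h0] using hr₂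
  classical
  set i₀ := Nat.findGreatest P n with hi₀
  have hi₀n : i₀ ≤ n := Nat.findGreatest_le n
  have hPi₀ : r ≤ q i₀ := Nat.findGreatest_spec (Nat.zero_le n) hP0
  rcases eq_or_lt_of_le hi₀n with heq | hlt
  · refine ⟨i₀, hi₀n, ?_⟩
    have : q i₀ ≤ r := by rw [heq, hn]; exact hr₁
    exact le_antisymm this hPi₀
  · have hnot : ¬ P (i₀ + 1) :=
      Nat.findGreatest_is_greatest (Nat.lt_succ_self i₀) (by omega)
    have h1 : q (i₀ + 1) < r := lt_of_not_ge hnot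
    rcases eq_or_lt_of_le hPi₀ with heq | h2
    · exact ⟨i₀, hi₀n, heq.symm⟩
    · exfalso
      have hfar := farey_middle (q i₀) (q (i₀ + 1)) r (haux i₀ hlt) h1 h2
      have hd1 : r.den ≤ (q i₀).den := hden i₀ hi₀n
      have hd2 : r.den ≤ (q (i₀ + 1)).den := hden (i₀ + 1) hlt
      have hp1 : 1 ≤ (q i₀).den := (q i₀).pos
      have hp2 : 1 ≤ (q (i₀ + 1)).den := (q (i₀ + 1)).pos
      have : ((q i₀).den : ℤ) + ((q (i₀ + 1)).den : ℤ) ≤ (r.den : ℤ) := hfar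
      push_cast at this
      omega
end

section
/- Let q₁ ≤ q₂ be rationals such that the closed interval [q₁, q₂] contains no integer. Then there exists a unique rational r ∈ [q₁, q₂] of minimal denominator: writing rationals in lowest terms, every rational r′ ∈ [q₁, q₂] has denominator at least that of r, and the only rational in [q₁, q₂] whose denominator equals that of r is r itself. -/
namespace Stmt3Aux

lemma num_eq_mul_den (r : ℚ) : (r.num : ℚ) = r * (r.den : ℚ) := by
  have h : (r.den : ℚ) ≠ 0 := by exact_mod_cast r.den_ne_zero
  exact (div_eq_iff h).mp (Rat.num_div_den r)

lemma den_int_add (n : ℤ) (q : ℚ) : ((n : ℚ) + q).den = q.den := by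
  refine Nat.dvd_antisymm ?_ ?_
  · simpa using Rat.add_den_dvd (n : ℚ) q
  · have h := Rat.add_den_dvd ((-n : ℤ) : ℚ) ((n : ℚ) + q)
    simpa using h

lemma num_int_add (n : ℤ) (q : ℚ) :
    ((n : ℚ) + q).num = n * (q.den : ℤ) + q.num := by
  have h1 := num_eq_mul_den ((n : ℚ) + q)
  rw [den_int_add] at h1
  have h2 := num_eq_mul_den q
  have key : ((((n : ℚ) + q).num : ℤ) : ℚ) = ((n * (q.den : ℤ) + q.num : ℤ) : ℚ) := by
    rw [h1, add_mul, ← h2]; push_cast; ring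
  exact_mod_cast key

lemma inv_num {q : ℚ} (hq : 0 < q) : q⁻¹.num = (q.den : ℤ) := by
  have hb : 0 < q.num := Rat.num_pos.mpr hq
  have hden : (q.den : ℚ) ≠ 0 := by exact_mod_cast q.den_ne_zero
  have hco : Nat.Coprime ((q.den : ℤ)).natAbs q.num.natAbs := by
    simpa [Nat.Coprime] using q.reduced.symm
  have h : q⁻¹ = ((q.den : ℤ) : ℚ) / ((q.num : ℤ) : ℚ) := by
    push_cast
    rw [num_eq_mul_den q, mul_comm, div_mul_eq_div_div, div_self hden, one_div]
  rw [h, Rat.num_div_eq_of_coprime hb hco]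

lemma inv_den {q : ℚ} (hq : 0 < q) : (q⁻¹.den : ℤ) = q.num := by
  have hb : 0 < q.num := Rat.num_pos.mpr hq
  have hden : (q.den : ℚ) ≠ 0 := by exact_mod_cast q.den_ne_zero
  have hco : Nat.Coprime ((q.den : ℤ)).natAbs q.num.natAbs := by
    simpa [Nat.Coprime] using q.reduced.symm
  have h : q⁻¹ = ((q.den : ℤ) : ℚ) / ((q.num : ℤ) : ℚ) := by
    push_cast
    rw [num_eq_mul_den q, mul_comm, div_mul_eq_div_div, div_self hden, one_div]
  rw [h, Rat.den_div_eq_of_coprime hb hco]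

lemma int_lt_iff (z : ℤ) (q : ℚ) : (z : ℚ) < q ↔ z * (q.den : ℤ) < q.num := by
  have hden : (0 : ℚ) < (q.den : ℚ) := by exact_mod_cast q.pos
  constructor
  · intro hzq
    have h := mul_lt_mul_of_pos_right hzq hden
    rw [← num_eq_mul_den q] at h
    exact_mod_cast h
  · intro h
    have h' : (z : ℚ) * (q.den : ℚ) < (q.num : ℚ) := by exact_mod_cast h
    rw [num_eq_mul_den q] at h'
    exact lt_of_mul_lt_mul_right h' hden.le

lemma int_le_iff (z : ℤ) (q : ℚ) : (z : ℚ) ≤ q ↔ z * (q.den : ℤ) ≤ q.num := by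
  have hden : (0 : ℚ) < (q.den : ℚ) := by exact_mod_cast q.pos
  constructor
  · intro hzq
    have h := mul_le_mul_of_nonneg_right hzq hden.le
    rw [← num_eq_mul_den q] at h
    exact_mod_cast h
  · intro h
    have h' : (z : ℚ) * (q.den : ℚ) ≤ (q.num : ℚ) := by exact_mod_cast h
    rw [num_eq_mul_den q] at h'
    exact le_of_mul_le_mul_right h' hden

/-- A Stern–Brocot style descent: any interval `[a,b]` with `1 ≤ a` contains a
fraction simultaneously minimizing numerator and denominator; moreover it is the
unique fraction in the interval with its numerator. -/
lemma lemA : ∀ (N : ℕ) (a b : ℚ), a.num.toNat + b.num.toNat ≤ N → 1 ≤ a → a ≤ b →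
    ∃ r : ℚ, a ≤ r ∧ r ≤ b ∧ ∀ r' : ℚ, a ≤ r' → r' ≤ b →
      r.num ≤ r'.num ∧ r.den ≤ r'.den ∧ (r'.num = r.num → r' = r) := by
  intro N
  induction N with
  | zero =>
    intro a b hm ha hab
    exfalso
    have h1 : 0 < a.num := Rat.num_pos.mpr (lt_of_lt_of_le one_pos ha)
    omega
  | succ N ih =>
    intro a b hm ha hab
    by_cases hz : ((⌈a⌉ : ℚ) ≤ b)
    · -- the interval contains the integer ⌈a⌉
      refine ⟨((⌈a⌉ : ℤ) : ℚ), Int.le_ceil a, hz, ?_⟩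
      intro r' h1 h2
      set z : ℤ := ⌈a⌉ with hzdef
      have hz1 : 1 ≤ z := by
        have h0 : (0:ℚ) < a := lt_of_lt_of_le one_pos ha
        exact Int.ceil_pos.mpr h0
      have h3 : ((z - 1 : ℤ) : ℚ) < r' := by
        have hc := Int.ceil_lt_add_one a
        push_cast
        push_cast at hc
        linarith [le_trans ha h1, h1]
      have h4 := (int_lt_iff (z-1) r').mp h3
      have hdenpos : (1 : ℤ) ≤ (r'.den : ℤ) := by exact_mod_cast r'.pos
      have hr'num : z ≤ r'.num := by nlinarith
      have h5 : (1 : ℤ) * (r'.den : ℤ) ≤ r'.num := by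
        refine (int_le_iff 1 r').mp ?_
        push_cast
        exact le_trans ha h1
      refine ⟨by simpa using hr'num, by simpa using Nat.one_le_iff_ne_zero.mpr r'.den_ne_zero, ?_⟩
      intro hnum
      have hnz : r'.num = z := by simpa using hnum
      have hd1 : r'.den = 1 := by
        by_contra hd
        have hd2 : (2 : ℤ) ≤ (r'.den : ℤ) := by
          have := r'.pos
          omega
        rw [hnz] at h4 h5
        nlinarith
      have hr'' := Rat.num_div_den r'
      rw [hd1] at hr''
      simp at hr''
      rw [← hr'', hnz]
    · -- no integer in the interval: invert and recurse
      have hc := Int.ceil_lt_add_one a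
      have hca := Int.le_ceil a
      have hbc : b < ((⌈a⌉ : ℤ) : ℚ) := lt_of_not_ge hz
      obtain ⟨n, hna, hbn⟩ : ∃ n : ℤ, (n : ℚ) < a ∧ b < (n : ℚ) + 1 :=
        ⟨⌈a⌉ - 1, by push_cast; linarith, by push_cast; linarith⟩
      have ha1 : 1 < a := by
        rcases eq_or_lt_of_le ha with h | h
        · exfalso
          apply hz
          rw [← h]
          simpa using le_trans (le_of_eq h) hab
        · exact h
      have hb1 : 1 < b := lt_of_lt_of_le ha1 hab
      have hn1 : 1 ≤ n := by
        have h2 : (1:ℚ) < (n : ℚ) + 1 := lt_trans hb1 hbn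
        have h3 : (0:ℚ) < (n : ℚ) := by linarith
        exact_mod_cast h3
      have h0an : 0 < a - (n:ℚ) := by linarith
      have h0bn : 0 < b - (n:ℚ) := by linarith
      have hbn1 : b - (n:ℚ) < 1 := by linarith
      set a' := (b - (n:ℚ))⁻¹ with ha'def
      set b' := (a - (n:ℚ))⁻¹ with hb'def
      have ha'1 : 1 < a' := one_lt_inv₀ h0bn |>.mpr hbn1
      have hab' : a' ≤ b' := inv_anti₀ h0an (by linarith)
      -- rewrite a-n, b-n as integer additions to compute num/den
      have hasub : a - (n:ℚ) = ((-n : ℤ) : ℚ) + a := by push_cast; ring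
      have hbsub : b - (n:ℚ) = ((-n : ℤ) : ℚ) + b := by push_cast; ring
      have hden_an : (a - (n:ℚ)).den = a.den := by rw [hasub, den_int_add]
      have hden_bn : (b - (n:ℚ)).den = b.den := by rw [hbsub, den_int_add]
      have hanum : a'.num = ((b - (n:ℚ)).den : ℤ) := inv_num h0bn
      have hbnum : b'.num = ((a - (n:ℚ)).den : ℤ) := inv_num h0an
      -- the measure decreases
      have hmaden : (a.den : ℤ) < a.num := by
        have := (int_lt_iff 1 a).mp (by push_cast; exact ha1)
        linarith
      have hmbden : (b.den : ℤ) < b.num := by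
        have := (int_lt_iff 1 b).mp (by push_cast; exact hb1)
        linarith
      have hmeasure : a'.num.toNat + b'.num.toNat ≤ N := by
        rw [hanum, hbnum, hden_an, hden_bn]
        omega
      obtain ⟨r₀, hr₀a, hr₀b, hmin⟩ := ih a' b' hmeasure (le_of_lt ha'1) hab'
      have hr₀1 : 1 < r₀ := lt_of_lt_of_le ha'1 hr₀a
      have hr₀pos : 0 < r₀ := lt_trans one_pos hr₀1
      have ha'pos : 0 < a' := lt_trans one_pos ha'1
      have hinv1 : a - (n:ℚ) ≤ r₀⁻¹ := by
        have h := inv_anti₀ hr₀pos hr₀b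
        rwa [hb'def, inv_inv] at h
      have hinv2 : r₀⁻¹ ≤ b - (n:ℚ) := by
        have h := inv_anti₀ ha'pos hr₀a
        rwa [ha'def, inv_inv] at h
      refine ⟨(n:ℚ) + r₀⁻¹, by linarith, by linarith, ?_⟩
      have hrden : ((((n:ℚ) + r₀⁻¹).den : ℕ) : ℤ) = r₀.num := by
        rw [den_int_add]; exact inv_den hr₀pos
      have hrnum : ((n:ℚ) + r₀⁻¹).num = n * r₀.num + (r₀.den : ℤ) := by
        rw [num_int_add, inv_den hr₀pos, inv_num hr₀pos]
      intro r' h1 h2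
      have hr'n : 0 < r' - (n:ℚ) := by linarith
      set s := (r' - (n:ℚ))⁻¹ with hsdef
      have hspos : 0 < s := by positivity
      have hsa : a' ≤ s := inv_anti₀ hr'n (by linarith)
      have hsb : s ≤ b' := inv_anti₀ h0an (by linarith)
      obtain ⟨hnum_le, hden_le, huniq⟩ := hmin s hsa hsb
      have hr's : r' = (n:ℚ) + s⁻¹ := by rw [hsdef, inv_inv]; ring
      have hr'den : ((r'.den : ℕ) : ℤ) = s.num := by
        rw [hr's, den_int_add]; exact inv_den hspos
      have hr'num : r'.num = n * s.num + (s.den : ℤ) := by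
        rw [hr's, num_int_add, inv_den hspos, inv_num hspos]
      have hdle : (r₀.den : ℤ) ≤ (s.den : ℤ) := by exact_mod_cast hden_le
      refine ⟨?_, ?_, ?_⟩
      · rw [hrnum, hr'num]
        have h3 : n * r₀.num ≤ n * s.num :=
          mul_le_mul_of_nonneg_left hnum_le (by linarith)
        linarith
      · have h := hnum_le
        have : ((((n:ℚ) + r₀⁻¹).den : ℕ) : ℤ) ≤ ((r'.den : ℕ) : ℤ) := by
          rw [hrden, hr'den]; exact h
        exact_mod_cast this
      · intro heq
        rw [hr'num, hrnum] at heq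
        have hseq : s.num = r₀.num := by
          by_contra hne
          have h2 : r₀.num + 1 ≤ s.num := by omega
          have h3 : n * (r₀.num + 1) ≤ n * s.num :=
            mul_le_mul_of_nonneg_left h2 (by linarith)
          have h4 : n * (r₀.num + 1) = n * r₀.num + n := by ring
          linarith
        rw [hr's, huniq hseq]

end Stmt3Aux

/-- Lemma 6.4 of the paper: a closed interval of rationals containing no
integer contains a unique rational of minimal denominator (denominators
taken in lowest terms). -/
theorem stmt_3 (q₁ q₂ : ℚ) (h : q₁ ≤ q₂)
    (hint : ∀ z : ℤ, ¬ (q₁ ≤ (z : ℚ) ∧ (z : ℚ) ≤ q₂)) :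
    ∃ r : ℚ, q₁ ≤ r ∧ r ≤ q₂ ∧
      (∀ r' : ℚ, q₁ ≤ r' → r' ≤ q₂ → r.den ≤ r'.den) ∧
      (∀ r' : ℚ, q₁ ≤ r' → r' ≤ q₂ → r'.den = r.den → r' = r) := by
  classical
  have hc := Int.ceil_lt_add_one q₁
  have hca := Int.le_ceil q₁
  have hbc : q₂ < ((⌈q₁⌉ : ℤ) : ℚ) := by
    by_contra hle
    exact hint ⌈q₁⌉ ⟨hca, le_of_not_gt hle⟩
  obtain ⟨n, hna, hbn⟩ : ∃ n : ℤ, (n : ℚ) < q₁ ∧ q₂ < (n : ℚ) + 1 :=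
    ⟨⌈q₁⌉ - 1, by push_cast; linarith, by push_cast; linarith⟩
  have h0an : 0 < q₁ - (n:ℚ) := by linarith
  have h0bn : 0 < q₂ - (n:ℚ) := by linarith
  have hbn1 : q₂ - (n:ℚ) < 1 := by linarith
  set a' := (q₂ - (n:ℚ))⁻¹ with ha'def
  set b' := (q₁ - (n:ℚ))⁻¹ with hb'def
  have ha'1 : 1 < a' := one_lt_inv₀ h0bn |>.mpr hbn1
  have hab' : a' ≤ b' := inv_anti₀ h0an (by linarith)
  obtain ⟨r₀, hr₀a, hr₀b, hmin⟩ :=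
    Stmt3Aux.lemA (a'.num.toNat + b'.num.toNat) a' b' le_rfl (le_of_lt ha'1) hab'
  have hr₀1 : 1 < r₀ := lt_of_lt_of_le ha'1 hr₀a
  have hr₀pos : 0 < r₀ := lt_trans one_pos hr₀1
  have ha'pos : 0 < a' := lt_trans one_pos ha'1
  have hinv1 : q₁ - (n:ℚ) ≤ r₀⁻¹ := by
    have h := inv_anti₀ hr₀pos hr₀b
    rwa [hb'def, inv_inv] at h
  have hinv2 : r₀⁻¹ ≤ q₂ - (n:ℚ) := by
    have h := inv_anti₀ ha'pos hr₀a
    rwa [ha'def, inv_inv] at h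
  have hrden : ((((n:ℚ) + r₀⁻¹).den : ℕ) : ℤ) = r₀.num := by
    rw [Stmt3Aux.den_int_add]; exact Stmt3Aux.inv_den hr₀pos
  refine ⟨(n:ℚ) + r₀⁻¹, by linarith, by linarith, ?_, ?_⟩
  · intro r' h1 h2
    have hr'n : 0 < r' - (n:ℚ) := by linarith
    set s := (r' - (n:ℚ))⁻¹ with hsdef
    have hspos : 0 < s := by positivity
    have hsa : a' ≤ s := inv_anti₀ hr'n (by linarith)
    have hsb : s ≤ b' := inv_anti₀ h0an (by linarith)
    obtain ⟨hnum_le, _, _⟩ := hmin s hsa hsb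
    have hr's : r' = (n:ℚ) + s⁻¹ := by rw [hsdef, inv_inv]; ring
    have hr'den : ((r'.den : ℕ) : ℤ) = s.num := by
      rw [hr's, Stmt3Aux.den_int_add]; exact Stmt3Aux.inv_den hspos
    have : ((((n:ℚ) + r₀⁻¹).den : ℕ) : ℤ) ≤ ((r'.den : ℕ) : ℤ) := by
      rw [hrden, hr'den]; exact hnum_le
    exact_mod_cast this
  · intro r' h1 h2 hdeq
    have hr'n : 0 < r' - (n:ℚ) := by linarith
    set s := (r' - (n:ℚ))⁻¹ with hsdef
    have hspos : 0 < s := by positivity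
    have hsa : a' ≤ s := inv_anti₀ hr'n (by linarith)
    have hsb : s ≤ b' := inv_anti₀ h0an (by linarith)
    obtain ⟨_, _, huniq⟩ := hmin s hsa hsb
    have hr's : r' = (n:ℚ) + s⁻¹ := by rw [hsdef, inv_inv]; ring
    have hr'den : ((r'.den : ℕ) : ℤ) = s.num := by
      rw [hr's, Stmt3Aux.den_int_add]; exact Stmt3Aux.inv_den hspos
    have hseq : s.num = r₀.num := by
      rw [← hr'den, ← hrden]
      exact_mod_cast hdeq
    rw [hr's, huniq hseq]
end

section
/- Let n ≥ 1 be an integer, let d be a rational number whose denominator in lowest terms is b ≥ 1, and let λ be a rational with 2λ ∈ ℤ. Then the number of integers x with 1 ≤ x ≤ n and λ − x·d ∈ ℤ equals: ⌊n/b⌋ if λ ∈ ℤ; ⌊n/b + 1/2⌋ if λ ∉ ℤ and b is even; and 0 if λ ∉ ℤ and b is odd. -/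
private lemma den_one_iff (q : ℚ) : q.den = 1 ↔ ∃ z : ℤ, q = z := by
  constructor
  · intro h
    exact ⟨q.num, ((Rat.den_eq_one_iff q).mp h).symm⟩
  · rintro ⟨z, rfl⟩
    exact Rat.den_intCast z

private lemma count_shift (n m : ℕ) (hm : 1 ≤ m) :
    ((Finset.Icc 1 n).filter (fun x => 2 * m ∣ x + m)).card = (n + m) / (2 * m) := by
  have h1 : ((Finset.Icc 1 n).filter (fun x => 2 * m ∣ x + m)).card
      = ((Finset.Ioc m (n + m)).filter (fun y => 2 * m ∣ y)).card := by
    apply Finset.card_nbij (i := fun x => x + m)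
    · intro a ha
      simp only [Finset.mem_coe, Finset.mem_filter, Finset.mem_Icc, Finset.mem_Ioc] at ha ⊢
      omega
    · intro a _ b _ hab
      simpa using hab
    · intro y hy
      simp only [Finset.coe_filter, Finset.mem_Ioc, Set.mem_setOf_eq] at hy
      refine ⟨y - m, ?_, by simp; omega⟩
      simp only [Finset.coe_filter, Finset.mem_Icc, Set.mem_setOf_eq]
      obtain ⟨⟨h1, h2⟩, h3⟩ := hy
      refine ⟨⟨by omega, by omega⟩, ?_⟩
      have hy' : y - m + m = y := by omega
      rw [hy']; exact h3
  rw [h1]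
  have hsplit : Finset.Ioc 0 (n + m) = Finset.Ioc 0 m ∪ Finset.Ioc m (n + m) :=
    (Finset.Ioc_union_Ioc_eq_Ioc (Nat.zero_le m) (by omega)).symm
  have hdisj : Disjoint ((Finset.Ioc 0 m).filter (fun y => 2 * m ∣ y))
      ((Finset.Ioc m (n + m)).filter (fun y => 2 * m ∣ y)) := by
    apply Finset.disjoint_filter_filter
    rw [Finset.disjoint_left]
    intro a ha hb
    simp only [Finset.mem_Ioc] at ha hb
    omega
  have hcard := Nat.Ioc_filter_dvd_card_eq_div (n + m) (2 * m)
  rw [hsplit, Finset.filter_union, Finset.card_union_of_disjoint hdisj] at hcard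
  have hz : ((Finset.Ioc 0 m).filter (fun y => 2 * m ∣ y)).card = 0 := by
    rw [Nat.Ioc_filter_dvd_card_eq_div]
    exact Nat.div_eq_of_lt (by omega)
  omega

/-- The counting step in Proposition 5.23 of the paper: for `d` a rational
of denominator `b` (in lowest terms) and `λ` a half-integer, the number of
integers `1 ≤ x ≤ n` with `λ − x·d ∈ ℤ` is `⌊n/b⌋` if `λ ∈ ℤ`;
`⌊n/b + 1/2⌋` if `λ ∉ ℤ` and `b` is even; and `0` if `λ ∉ ℤ` and `b` is
odd.  (A rational is an integer iff its denominator in lowest terms is 1.) -/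
theorem stmt_6 (n : ℕ) (hn : 1 ≤ n) (d lam : ℚ) (b : ℕ) (hb : d.den = b)
    (hlam : (2 * lam).den = 1) :
    ((Finset.Icc 1 n).filter (fun x : ℕ => (lam - (x : ℚ) * d).den = 1)).card =
      if lam.den = 1 then n / b
      else if Even b then (2 * n + b) / (2 * b)
      else 0 := by
  set c : ℤ := d.num with hc
  set L : ℤ := (2 * lam).num with hLdef
  have hb1 : 1 ≤ b := hb ▸ d.den_pos
  have hbQ : (b : ℚ) ≠ 0 := by positivity
  have hL : (L : ℚ) = 2 * lam := (Rat.den_eq_one_iff _).mp hlam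
  have hlam2 : lam = (L : ℚ) / 2 := by rw [hL]; ring
  have hd : (c : ℚ) / (b : ℚ) = d := by rw [← hb]; exact_mod_cast Rat.num_div_den d
  have hcop : IsCoprime (b : ℤ) c := by
    rw [Int.isCoprime_iff_gcd_eq_one]
    have := d.reduced
    rw [hb] at this
    simpa [Int.gcd, Nat.coprime_comm] using this
  have key : ∀ x : ℕ, (lam - (x : ℚ) * d).den = 1 ↔
      (2 * (b : ℤ)) ∣ (L * b - 2 * x * c) := by
    intro x
    rw [den_one_iff]
    constructor
    · rintro ⟨z, hz⟩
      refine ⟨z, ?_⟩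
      have hQ : (L : ℚ) * b - 2 * x * c = 2 * b * z := by
        rw [hlam2, ← hd] at hz
        field_simp at hz
        linarith
      exact_mod_cast hQ
    · rintro ⟨z, hz⟩
      refine ⟨z, ?_⟩
      have hQ : (L : ℚ) * b - 2 * x * c = 2 * b * z := by exact_mod_cast hz
      rw [hlam2, ← hd]
      field_simp
      linarith
  by_cases hden : lam.den = 1
  · simp only [hden, if_true]
    have hM : (lam.num : ℚ) = lam := (Rat.den_eq_one_iff lam).mp hden
    set M : ℤ := lam.num with hMdef
    have hLM : L = 2 * M := by
      have h2 : (L : ℚ) = ((2 * M : ℤ) : ℚ) := by rw [hL, ← hM]; push_cast; ring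
      exact_mod_cast h2
    have key2 : ∀ x : ℕ, x ∈ Finset.Icc 1 n →
        ((lam - (x : ℚ) * d).den = 1 ↔ b ∣ x) := by
      intro x _
      rw [key x, hLM]
      constructor
      · rintro ⟨z, hz⟩
        have hbx : (b : ℤ) ∣ (x : ℤ) * c := ⟨M - z, by linarith⟩
        have := hcop.dvd_of_dvd_mul_right hbx
        exact_mod_cast this
      · rintro ⟨k, rfl⟩
        exact ⟨M - k * c, by push_cast; ring⟩
    rw [Finset.filter_congr key2, show Finset.Icc 1 n = Finset.Ioc 0 n from rfl]
    exact Nat.Ioc_filter_dvd_card_eq_div n b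
  · simp only [hden, if_false]
    have hLodd : Odd L := by
      rw [← Int.not_even_iff_odd]
      rintro ⟨M, hM2⟩
      apply hden
      rw [den_one_iff]
      refine ⟨M, ?_⟩
      have h2 : (L : ℚ) = 2 * lam := hL
      rw [hM2] at h2
      push_cast at h2
      linarith
    by_cases hbe : Even b
    · simp only [hbe, if_true]
      obtain ⟨m, hm2⟩ := hbe
      have hm1 : 1 ≤ m := by omega
      have hcodd : Odd c := by
        rw [← Int.not_even_iff_odd]
        intro hce
        have h2b : (2 : ℤ) ∣ (b : ℤ) := by
          refine ⟨m, ?_⟩; exact_mod_cast congrArg (Nat.cast : ℕ → ℤ) (by omega : b = 2 * m)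
        have h2c : (2 : ℤ) ∣ c := hce.two_dvd
        have := hcop.isUnit_of_dvd' h2b h2c
        rw [Int.isUnit_iff] at this
        omega
      obtain ⟨k, hk⟩ := hLodd
      obtain ⟨j, hj⟩ := hcodd
      have hbZ : (b : ℤ) = 2 * m := by exact_mod_cast congrArg (Nat.cast : ℕ → ℤ) (by omega : b = 2 * m)
      have key2 : ∀ x : ℕ, x ∈ Finset.Icc 1 n →
          ((lam - (x : ℚ) * d).den = 1 ↔ 2 * m ∣ x + m) := by
        intro x _
        rw [key x]
        constructor
        · rintro ⟨z, hz⟩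
          rw [hbZ, hk, hj] at hz
          have h1 : (2 * (m : ℤ)) ∣ c * ((x : ℤ) + m) := by
            refine ⟨k + j + 1 - z, ?_⟩
            rw [hj]
            ring_nf
            ring_nf at hz
            linarith
          have h2 : (2 * (m : ℤ)) ∣ (x : ℤ) + m := by
            have hcop' : IsCoprime (2 * (m : ℤ)) c := hbZ ▸ hcop
            exact hcop'.dvd_of_dvd_mul_left h1
          exact_mod_cast h2
        · rintro ⟨t, ht⟩
          have hx : (x : ℤ) = 2 * m * t - m := by
            have : (x : ℤ) + m = 2 * m * t := by exact_mod_cast congrArg (Nat.cast : ℕ → ℤ) ht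
            linarith
          refine ⟨k + 1 - 2 * t * j - t + j, ?_⟩
          rw [hbZ, hk, hj, hx]
          ring
      rw [Finset.filter_congr key2, count_shift n m hm1,
        show 2 * n + b = 2 * (n + m) by omega, show 2 * b = 2 * (2 * m) by omega,
        Nat.mul_div_mul_left _ _ (by norm_num : 0 < 2)]
    · simp only [hbe, if_false]
      rw [Finset.card_eq_zero, Finset.filter_eq_empty_iff]
      intro x _
      rw [key x]
      rintro ⟨z, hz⟩
      have heven : Even (L * (b : ℤ)) := ⟨b * z + x * c, by linarith⟩
      rw [Int.even_mul] at heven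
      rcases heven with h | h
      · exact (Int.not_even_iff_odd.mpr hLodd) h
      · have : Even b := by exact_mod_cast h
        exact hbe this
end

section
/- For any rationals t > t′, there is exactly one minimal unimodular chain from t to t′. -/
namespace Stmt10

def dt (x y : ℚ) : ℤ := x.num * y.den - y.num * x.den

/-- greedy successor predicate -/
def G (t' x y : ℚ) : Prop :=
  dt x y = 1 ∧ t' ≤ y ∧
  ¬ (1 ≤ (y.den : ℤ) - (x.den : ℤ) ∧
     t'.num * ((y.den : ℤ) - (x.den : ℤ)) ≤ (y.num - x.num) * t'.den)

lemma lt_of_dt {x y : ℚ} (h : dt x y = 1) : y < x := by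
  rw [Rat.lt_iff]
  unfold dt at h
  nlinarith [h]

lemma g_unique {t' x y y' : ℚ} (hx : t' < x) (h : G t' x y) (h' : G t' x y') : y = y' := by
  obtain ⟨hd, hy, ht⟩ := h
  obtain ⟨hd', hy', ht'⟩ := h'
  unfold dt at hd hd'
  rw [Rat.lt_iff] at hx
  rw [Rat.le_iff] at hy hy'
  set j : ℤ := y'.num * y.den - y.num * y'.den with hj
  have hnum : y'.num = j * x.num + y.num := by
    rw [hj]; linear_combination y.num * hd' - y'.num * hd
  have hden : (y'.den : ℤ) = j * x.den + y.den := by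
    rw [hj]; linear_combination (y.den : ℤ) * hd' - (y'.den : ℤ) * hd
  have hxd : (0:ℤ) < x.den := by exact_mod_cast x.pos
  have hyd : (0:ℤ) < y.den := by exact_mod_cast y.pos
  have hyd' : (0:ℤ) < y'.den := by exact_mod_cast y'.pos
  rcases lt_trichotomy j 0 with hj0 | hj0 | hj0
  · exfalso
    apply ht
    constructor
    · nlinarith
    · nlinarith
  · apply Rat.ext
    · rw [hnum, hj0]; ring
    · have : (y'.den : ℤ) = y.den := by rw [hden, hj0]; ring
      exact_mod_cast this.symm
  · exfalso
    apply ht'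
    constructor
    · nlinarith
    · nlinarith


lemma g_exists (t' x : ℚ) (hx : t' < x) : ∃ y, G t' x y := by
  have hcopx : IsCoprime x.num (x.den : ℤ) := by
    rw [Int.isCoprime_iff_gcd_eq_one]
    simpa [Int.gcd] using x.reduced
  obtain ⟨u, v, huv⟩ := hcopx
  rw [Rat.lt_iff] at hx
  have hxd : (0:ℤ) < x.den := by exact_mod_cast x.pos
  have hsd : (0:ℤ) < t'.den := by exact_mod_cast t'.pos
  set P : ℤ → Prop := fun j =>
    1 ≤ u + j * x.den ∧ t'.num * (u + j * x.den) ≤ (-v + j * x.num) * t'.den with hP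
  have hbdd : ∃ b, ∀ z, P z → b ≤ z := by
    refine ⟨-(|u| + 1), fun z hz => ?_⟩
    by_contra hc
    push_neg at hc
    have h1 : z ≤ -|u| - 2 := by omega
    have h0 := abs_nonneg u
    have h2 : z * (x.den:ℤ) ≤ z := by
      nlinarith [mul_nonneg (by linarith : (0:ℤ) ≤ -z) (by linarith : (0:ℤ) ≤ (x.den:ℤ) - 1)]
    have h3 := hz.1
    have h4 := neg_abs_le u
    have h5 := le_abs_self u
    omega
  have hinh : ∃ z, P z := by
    set e0 : ℤ := -v * t'.den - t'.num * u with he0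
    refine ⟨|u| + |e0| + 1, ?_, ?_⟩
    · have h1 : (0:ℤ) ≤ |u| + |e0| + 1 := by positivity
      have h2 : |u| + |e0| + 1 ≤ (|u| + |e0| + 1) * x.den := by nlinarith
      have h3 := neg_abs_le u
      have h4 := abs_nonneg e0
      have h5 := abs_nonneg u
      omega
    · have hc1 : 1 ≤ x.num * t'.den - t'.num * x.den := by omega
      have h1 : (0:ℤ) ≤ |u| + |e0| + 1 := by positivity
      have h6 := neg_abs_le e0
      have h7 := abs_nonneg u
      have h8 := abs_nonneg e0
      nlinarith [mul_nonneg h1 (by linarith : (0:ℤ) ≤ x.num * t'.den - t'.num * x.den - 1)]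
  obtain ⟨j, hjP, hjmin⟩ := Int.exists_least_of_bdd hbdd hinh
  set yn : ℤ := -v + j * x.num with hyn
  set ydZ : ℤ := u + j * x.den with hydZ
  have hyd1 : 1 ≤ ydZ := hjP.1
  have hdet : x.num * ydZ - yn * x.den = 1 := by
    rw [hyn, hydZ]; linear_combination huv
  have hcop : yn.natAbs.Coprime ydZ.toNat := by
    have hic : IsCoprime yn ydZ := ⟨-(x.den:ℤ), x.num, by linear_combination hdet⟩
    have h1 : yn.gcd ydZ = 1 := Int.isCoprime_iff_gcd_eq_one.mp hic
    have h2 : ydZ.natAbs = ydZ.toNat := by omega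
    simpa [Int.gcd, h2] using h1
  set y : ℚ := Rat.mk' yn ydZ.toNat (by omega) hcop with hy
  have hynum : y.num = yn := rfl
  have hyden : (y.den : ℤ) = ydZ := by
    show ((ydZ.toNat : ℤ)) = ydZ
    omega
  refine ⟨y, ?_, ?_, ?_⟩
  · unfold dt
    rw [hynum, hyden]; exact hdet
  · rw [Rat.le_iff, hynum, hyden]
    exact hjP.2
  · rintro ⟨h1, h2⟩
    rw [hyden] at h1
    rw [hynum, hyden] at h2
    have hPj1 : P (j - 1) := by
      constructor
      · have : u + (j-1) * x.den = ydZ - x.den := by rw [hydZ]; ring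
        omega
      · have e1 : u + (j-1) * x.den = ydZ - x.den := by rw [hydZ]; ring
        have e2 : -v + (j-1) * x.num = yn - x.num := by rw [hyn]; ring
        rw [e1, e2]
        exact h2
    have := hjmin _ hPj1
    omega


def av (xr yr : ℤ) (q : ℕ → ℚ) (m : ℕ) : ℤ := (q m).num * yr - xr * (q m).den
def bv (xP yP : ℤ) (q : ℕ → ℚ) (m : ℕ) : ℤ := xP * (q m).den - (q m).num * yP

set_option maxHeartbeats 1000000 in
lemma deviation (t t' : ℚ) (q : ℕ → ℚ) (n : ℕ)
    (hch : IsMinimalUnimodChain q n t t') (i : ℕ) (hi : i < n)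
    (h1 : 1 ≤ ((q (i+1)).den : ℤ) - ((q i).den : ℤ))
    (h2 : t'.num * (((q (i+1)).den : ℤ) - ((q i).den : ℤ)) ≤
          ((q (i+1)).num - (q i).num) * t'.den) :
    False := by
  obtain ⟨⟨hq0, hqn, hdec, hdet⟩, hmed⟩ := hch
  set xP : ℤ := (q i).num with hxP
  set yP : ℤ := ((q i).den : ℤ) with hyP
  set xr : ℤ := (q (i+1)).num - xP with hxr
  set yr : ℤ := ((q (i+1)).den : ℤ) - yP with hyr
  set a : ℕ → ℤ := av xr yr q with ha
  set b : ℕ → ℤ := bv xP yP q with hb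
  have hPr : xP * yr - xr * yP = 1 := by
    rw [hxP, hyP, hxr, hyr]; linear_combination hdet i hi
  have adef : ∀ m, a m = (q m).num * yr - xr * (q m).den := fun m => rfl
  have bdef : ∀ m, b m = xP * (q m).den - (q m).num * yP := fun m => rfl
  have R : ∀ m, m < n → a m * b (m+1) - b m * a (m+1) = 1 := by
    intro m hm
    have hd := hdet m hm
    have key : a m * b (m+1) - b m * a (m+1) =
        ((q m).num * ((q (m+1)).den : ℤ) - (q (m+1)).num * ((q m).den : ℤ)) *
        (xP * yr - xr * yP) := by
      rw [adef, adef, bdef, bdef]; ring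
    rw [key, hd, hPr]; ring
  have num_eq : ∀ m, (q m).num = a m * xP + b m * xr := by
    intro m
    have key : a m * xP + b m * xr = (q m).num * (xP * yr - xr * yP) := by
      rw [adef, bdef]; ring
    rw [key, hPr]; ring
  have den_eq : ∀ m, ((q m).den : ℤ) = a m * yP + b m * yr := by
    intro m
    have key : a m * yP + b m * yr = ((q m).den : ℤ) * (xP * yr - xr * yP) := by
      rw [adef, bdef]; ring
    rw [key, hPr]; ring
  have ha_i : a i = 1 := by
    rw [adef, hxr, hyr, hxP, hyP]; linear_combination hdet i hi
  have hb_i : b i = 0 := by rw [bdef, hxP, hyP]; ring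
  have ha_i1 : a (i+1) = 1 := by
    rw [adef, hxr, hyr, hxP, hyP]; linear_combination hdet i hi
  have hb_i1 : b (i+1) = 1 := by
    rw [bdef, hxP, hyP]; linear_combination hdet i hi
  have hyP1 : (1:ℤ) ≤ yP := by rw [hyP]; exact_mod_cast (q i).pos
  clear_value xP yP xr yr a b
  -- the invariant
  have claim : ∀ k, i + k + 1 ≤ n →
      1 ≤ a (i+k) ∧ 0 ≤ b (i+k) ∧ a (i+k) ≤ a (i+k+1) ∧ b (i+k) + 1 ≤ b (i+k+1) := by
    intro k
    induction k with
    | zero =>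
      intro _
      simp only [Nat.add_zero]
      rw [ha_i, hb_i, ha_i1, hb_i1]
      omega
    | succ k ih =>
      intro hk
      obtain ⟨ha1, hb1, ha12, hb12⟩ := ih (by omega)
      have hRm : a (i+k) * b (i+k+1) - b (i+k) * a (i+k+1) = 1 := R (i+k) (by omega)
      have hRm1 : a (i+k+1) * b (i+k+2) - b (i+k+1) * a (i+k+2) = 1 := R (i+k+1) (by omega)
      have hnum1 := num_eq (i+k)
      have hnum2 := num_eq (i+k+1)
      have hnum3 := num_eq (i+k+2)
      have hdn1 := den_eq (i+k)
      have hdn2 := den_eq (i+k+1)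
      have hdn3 := den_eq (i+k+2)
      have hpos3 : (1:ℤ) ≤ ((q (i+k+2)).den : ℤ) := by exact_mod_cast (q (i+k+2)).pos
      have hmm := hmed (i+k+1) (by omega) (by omega)
      have hidx : i+k+1-1 = i+k := by omega
      rw [hidx] at hmm
      show 1 ≤ a (i+k+1) ∧ 0 ≤ b (i+k+1) ∧ a (i+k+1) ≤ a (i+k+2) ∧
        b (i+k+1) + 1 ≤ b (i+k+2)
      generalize e1 : a (i+k) = a1 at ha1 ha12 hRm hnum1 hdn1
      generalize e2 : b (i+k) = b1 at hb1 hb12 hRm hnum1 hdn1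
      generalize e3 : a (i+k+1) = a2 at ha12 hRm hRm1 hnum2 hdn2 ⊢
      generalize e4 : b (i+k+1) = b2 at hb12 hRm hRm1 hnum2 hdn2 ⊢
      generalize e5 : a (i+k+2) = a3 at hRm1 hnum3 hdn3 ⊢
      generalize e6 : b (i+k+2) = b3 at hRm1 hnum3 hdn3 ⊢
      set j : ℤ := (b3 + b1) * a1 - (a3 + a1) * b1 with hj
      have hja : j * a2 = a1 + a3 := by rw [hj]; linear_combination a1 * hRm1 + a3 * hRm
      have hjb : j * b2 = b1 + b3 := by rw [hj]; linear_combination b3 * hRm + b1 * hRm1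
      clear_value j
      rcases lt_trichotomy j 1 with hj0 | hj0 | hj0
      · exfalso
        have t1 : j * a2 ≤ 0 := by
          have h := mul_nonneg (by omega : (0:ℤ) ≤ -j) (by linarith only [ha1, ha12] : (0:ℤ) ≤ a2)
          linarith only [h]
        have t2 : j * b2 ≤ 0 := by
          have h := mul_nonneg (by omega : (0:ℤ) ≤ -j) (by linarith only [hb1, hb12] : (0:ℤ) ≤ b2)
          linarith only [h]
        have e3a : a3 ≤ -1 := by linarith only [t1, hja, ha1]
        have e3b : b3 ≤ 0 := by linarith only [t2, hjb, hb1]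
        have m1 := mul_nonneg (by linarith only [e3a] : (0:ℤ) ≤ -a3 - 1)
          (by linarith only [hyP1] : (0:ℤ) ≤ yP - 1)
        have m2 := mul_nonneg (by linarith only [e3b] : (0:ℤ) ≤ -b3)
          (by linarith only [h1] : (0:ℤ) ≤ yr)
        linarith only [m1, m2, hdn3, hpos3, e3a, hyP1]
      · exfalso
        rw [hj0, one_mul] at hja hjb
        refine hmm ⟨?_, ?_⟩
        · rw [hnum1, hnum2, hnum3]; linear_combination xP * hja + xr * hjb
        · have hz : ((q (i+k+1)).den : ℤ) = ((q (i+k)).den : ℤ) + ((q (i+k+2)).den : ℤ) := by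
            rw [hdn1, hdn2, hdn3]; linear_combination yP * hja + yr * hjb
          exact_mod_cast hz
      · have hj2 : 2 ≤ j := by omega
        refine ⟨by linarith only [ha1, ha12], by linarith only [hb1, hb12], ?_, ?_⟩
        · have m := mul_nonneg (by linarith only [hj2] : (0:ℤ) ≤ j - 2)
            (by linarith only [ha1, ha12] : (0:ℤ) ≤ a2)
          linarith only [m, hja, ha12, ha1]
        · have m := mul_nonneg (by linarith only [hj2] : (0:ℤ) ≤ j - 2)
            (by linarith only [hb1, hb12] : (0:ℤ) ≤ b2)
          linarith only [m, hjb, hb12, hb1]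
  -- conclude
  obtain ⟨hA, _, hAle, _⟩ := claim (n - i - 1) (by omega)
  have hfin : i + (n - i - 1) + 1 = n := by omega
  rw [hfin] at hAle
  have hAn : 1 ≤ a n := by linarith
  rw [adef, hqn] at hAn
  have hsd : (0:ℤ) < t'.den := by exact_mod_cast t'.pos
  linarith


noncomputable def gf (t' : ℚ) : ℚ → ℚ :=
  fun x => if h : t' < x then (g_exists t' x h).choose else t'

lemma gf_spec {t' x : ℚ} (h : t' < x) : G t' x (gf t' x) := by
  rw [gf, dif_pos h]; exact (g_exists t' x h).choose_spec

lemma gf_self (t' : ℚ) : gf t' t' = t' := by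
  rw [gf, dif_neg (lt_irrefl t')]

lemma g_measure (t' x : ℚ) (hx : t' < x) :
    t' ≤ gf t' x ∧ (gf t' x = t' ∨
      ((gf t' x).num * t'.den - t'.num * (gf t' x).den).toNat <
      (x.num * t'.den - t'.num * x.den).toNat) := by
  obtain ⟨hd, hle, ht⟩ := gf_spec hx
  refine ⟨hle, ?_⟩
  set y := gf t' x with hy
  by_cases hyt : y = t'
  · exact Or.inl hyt
  · right
    have hylt : t' < y := lt_of_le_of_ne hle (Ne.symm hyt)
    have hx' : t'.num * x.den < x.num * t'.den := (Rat.lt_iff _ _).mp hx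
    have hy' : t'.num * y.den < y.num * t'.den := (Rat.lt_iff _ _).mp hylt
    unfold dt at hd
    have hxd : (0:ℤ) < x.den := by exact_mod_cast x.pos
    have hyd : (0:ℤ) < y.den := by exact_mod_cast y.pos
    suffices h : y.num * t'.den - t'.num * y.den < x.num * t'.den - t'.num * x.den by
      omega
    by_cases hdd : (y.den : ℤ) ≤ (x.den : ℤ)
    · -- denominators do not increase : compare values
      set ey : ℤ := y.num * t'.den - t'.num * y.den with hey
      set ex : ℤ := x.num * t'.den - t'.num * x.den with hex
      have hsd : (0:ℤ) < t'.den := by exact_mod_cast t'.pos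
      have k1 : ex * y.den - ey * x.den = t'.den * (x.num * y.den - y.num * x.den) := by
        rw [hex, hey]; ring
      rw [hd] at k1
      have k2 : ey * (y.den:ℤ) ≤ ey * x.den :=
        mul_le_mul_of_nonneg_left hdd (by rw [hey]; linarith only [hy'] : (0:ℤ) ≤ ey)
      have k3 : ey * (y.den:ℤ) < ex * y.den := by linarith only [k1, k2, hsd]
      exact lt_of_mul_lt_mul_right k3 (le_of_lt hyd)
    · -- denominator increased : use the greedy (tail) condition
      push_neg at hdd
      have hB : ¬ (t'.num * ((y.den : ℤ) - (x.den : ℤ)) ≤ (y.num - x.num) * t'.den) :=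
        fun hB => ht ⟨by omega, hB⟩
      push_neg at hB
      linarith only [hB]

lemma gf_reach (t' : ℚ) : ∀ (N : ℕ) (x : ℚ), t' ≤ x →
    (x.num * t'.den - t'.num * x.den).toNat = N → ∃ k, (gf t')^[k] x = t' := by
  intro N
  induction N using Nat.strong_induction_on with
  | _ N ih =>
    intro x hx hN
    rcases eq_or_lt_of_le hx with he | hlt
    · exact ⟨0, he.symm⟩
    · obtain ⟨hle, hor⟩ := g_measure t' x hlt
      rcases hor with h0 | hdec
      · exact ⟨1, by simpa using h0⟩
      · rw [hN] at hdec
        obtain ⟨k, hk⟩ := ih _ hdec (gf t' x) hle rfl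
        exact ⟨k+1, by rw [Function.iterate_succ_apply]; exact hk⟩



lemma chain_anti {q : ℕ → ℚ} {n : ℕ} {t t' : ℚ} (hch : IsUnimodChain q n t t') :
    ∀ j k, j ≤ k → k ≤ n → q k ≤ q j := by
  obtain ⟨-, -, hdec, -⟩ := hch
  intro j k hjk hkn
  induction k with
  | zero =>
    have hj0 : j = 0 := Nat.le_zero.mp hjk
    rw [hj0]
  | succ k ih =>
    rcases eq_or_lt_of_le hjk with he | hlt
    · rw [he]
    · exact le_trans (le_of_lt (hdec k (by omega))) (ih (by omega) (by omega))

lemma min_greedy {q : ℕ → ℚ} {n : ℕ} {t t' : ℚ}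
    (hch : IsMinimalUnimodChain q n t t') {i : ℕ} (hi : i < n) :
    G t' (q i) (q (i+1)) := by
  refine ⟨hch.1.2.2.2 i hi, ?_, ?_⟩
  · have h := chain_anti hch.1 (i+1) n hi (le_refl n)
    rw [hch.1.2.1] at h
    exact h
  · rintro ⟨c1, c2⟩
    exact deviation t t' q n hch i hi c1 c2

lemma min_pos {q : ℕ → ℚ} {n : ℕ} {t t' : ℚ}
    (hch : IsMinimalUnimodChain q n t t') {i : ℕ} (hi : i < n) : t' < q i :=
  lt_of_le_of_lt ((min_greedy hch hi).2.1) (lt_of_dt (min_greedy hch hi).1)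

end Stmt10

/-- Remark 4.7 of the paper: for any rationals `t > t'` there is exactly one
minimal unimodular chain from `t` to `t'` (uniqueness meaning any two such
chains have the same length and the same terms). -/
theorem stmt_10 (t t' : ℚ) (htt : t' < t) :
    (∃ (q : ℕ → ℚ) (n : ℕ), IsMinimalUnimodChain q n t t') ∧
    (∀ (q q' : ℕ → ℚ) (n n' : ℕ),
      IsMinimalUnimodChain q n t t' → IsMinimalUnimodChain q' n' t t' →
      n = n' ∧ ∀ i ≤ n, q i = q' i) := by
  classical
  constructor
  · -- existence : iterate the greedy successor function
    obtain ⟨k0, hk0⟩ := Stmt10.gf_reach t' _ t htt.le rfl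
    have hex : ∃ k, (Stmt10.gf t')^[k] t = t' := ⟨k0, hk0⟩
    set g : ℚ → ℚ := Stmt10.gf t' with hg
    set q : ℕ → ℚ := fun i => g^[i] t with hqdef
    set n := Nat.find hex with hn
    have hqn : q n = t' := Nat.find_spec hex
    have hlb : ∀ i, t' ≤ q i := by
      intro i
      induction i with
      | zero => exact htt.le
      | succ i ih =>
        have hstep : q (i+1) = g (q i) := Function.iterate_succ_apply' g i t
        rw [hstep]
        rcases eq_or_lt_of_le ih with he | hlt
        · rw [← he, hg, Stmt10.gf_self]
        · exact (Stmt10.gf_spec hlt).2.1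
    have hstrict : ∀ i, i < n → t' < q i := by
      intro i hi
      rcases eq_or_lt_of_le (hlb i) with he | hlt
      · exact absurd he.symm (Nat.find_min hex hi)
      · exact hlt
    have hGq : ∀ i, i < n → Stmt10.G t' (q i) (q (i+1)) := by
      intro i hi
      have hstep : q (i+1) = g (q i) := Function.iterate_succ_apply' g i t
      rw [hstep, hg]
      exact Stmt10.gf_spec (hstrict i hi)
    refine ⟨q, n, ⟨⟨rfl, hqn, ?_, ?_⟩, ?_⟩⟩
    · intro i hi; exact Stmt10.lt_of_dt (hGq i hi).1
    · intro i hi; exact (hGq i hi).1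
    · rintro i h1 h2 ⟨hnum, hden⟩
      obtain ⟨-, -, htail⟩ := hGq (i-1) (by omega)
      have hfix : i - 1 + 1 = i := by omega
      rw [hfix] at htail
      apply htail
      have hp : (0:ℤ) < ((q (i+1)).den : ℤ) := by exact_mod_cast (q (i+1)).pos
      have hdz : ((q i).den : ℤ) = ((q (i-1)).den : ℤ) + ((q (i+1)).den : ℤ) := by
        exact_mod_cast hden
      constructor
      · omega
      · have e1 : ((q i).den : ℤ) - ((q (i-1)).den : ℤ) = ((q (i+1)).den : ℤ) := by omega
        have e2 : (q i).num - (q (i-1)).num = (q (i+1)).num := by omega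
        rw [e1, e2]
        exact (Rat.le_iff _ _).mp (hlb (i+1))
  · -- uniqueness : any two minimal chains agree
    intro q q' n n' hc hc'
    have key : ∀ i, i ≤ n → i ≤ n' → q i = q' i := by
      intro i
      induction i with
      | zero => intro _ _; rw [hc.1.1, hc'.1.1]
      | succ i ih =>
        intro h1 h2
        have he := ih (by omega) (by omega)
        have hG1 := Stmt10.min_greedy hc (show i < n by omega)
        have hG2 := Stmt10.min_greedy hc' (show i < n' by omega)
        rw [← he] at hG2
        exact Stmt10.g_unique (Stmt10.min_pos hc (show i < n by omega)) hG1 hG2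
    have hnn : n = n' := by
      by_contra hne
      rcases Nat.lt_or_ge n n' with h | h
      · have heq := key n (le_refl n) (le_of_lt h)
        have h2 := Stmt10.min_pos hc' h
        rw [← heq, hc.1.2.1] at h2
        exact lt_irrefl t' h2
      · have h' : n' < n := by omega
        have heq := key n' (le_of_lt h') (le_refl n')
        have h2 := Stmt10.min_pos hc h'
        rw [heq, hc'.1.2.1] at h2
        exact lt_irrefl t' h2
    exact ⟨hnn, fun i hi => key i hi (hnn ▸ hi)⟩
end

section
/- Let t > t′ be rationals such that (t′, t) ∩ ℤ = {N, N+1, …, N+a} is nonempty (a ≥ 0), and let t = q₀ > q₁ > ⋯ > q_{λ+1} = t′ be the minimal unimodular chain from t to t′, with denominators d₀, …, d_{λ+1} in lowest terms. Then each of the integers N, N+1, …, N+a occurs as a term of the chain; moreover, if q_{h} is the last term before the term equal to N+a and q_{l} is the first term after the term equal to N, then d₀ > d₁ > ⋯ > d_h is strictly decreasing and d_l < d_{l+1} < ⋯ < d_{λ+1} is strictly increasing. -/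
lemma rat_lt_iff' (p r : ℚ) : p < r ↔ p.num * (r.den : ℤ) < r.num * (p.den : ℤ) := by
  conv_lhs => rw [← Rat.num_div_den p, ← Rat.num_div_den r]
  rw [div_lt_div_iff₀ (by positivity) (by positivity)]
  exact_mod_cast Iff.rfl

lemma rat_coprime' (p : ℚ) : IsCoprime ((p.den : ℤ)) p.num := by
  rw [Int.isCoprime_iff_gcd_eq_one, Int.gcd]
  simp only [Int.natAbs_natCast]
  exact Nat.Coprime.gcd_eq_one (Nat.Coprime.symm p.reduced)

/-- Structure statement (4.2) in Remark 4.7 of the paper: if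
`(t', t) ∩ ℤ = {N, …, N + a}` is nonempty, then every one of these integers
occurs as a term of the minimal unimodular chain from `t` to `t'`, the
denominators strictly decrease up to the term equal to `N + a` and strictly
increase from the term equal to `N` onwards. -/
theorem stmt_12 (t t' : ℚ) (htt : t' < t)
    (N : ℤ) (a : ℕ)
    (hint : ∀ z : ℤ, (t' < (z : ℚ) ∧ (z : ℚ) < t) ↔ (N ≤ z ∧ z ≤ N + a))
    (q : ℕ → ℚ) (n : ℕ) (hq : IsMinimalUnimodChain q n t t') :
    (∀ j : ℤ, N ≤ j → j ≤ N + a → ∃ i ≤ n, q i = (j : ℚ)) ∧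
    (∀ ia i0, ia ≤ n → i0 ≤ n →
      q ia = ((N + (a : ℤ) : ℤ) : ℚ) → q i0 = ((N : ℤ) : ℚ) →
      (∀ i, i + 1 < ia → (q (i + 1)).den < (q i).den) ∧
      (∀ i, i0 < i → i < n → (q i).den < (q (i + 1)).den)) := by
  classical
  obtain ⟨⟨h0, hn, hdec, huni⟩, hmin⟩ := hq
  have hdpos : ∀ i, (0 : ℤ) < ((q i).den : ℤ) := fun i => by
    exact_mod_cast (q i).pos
  -- strict antitonicity of the chain
  have hmono : ∀ i j, i < j → j ≤ n → q j < q i := by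
    intro i j
    induction j with
    | zero => intro h _; omega
    | succ k ih =>
      intro hij hjn
      rcases Nat.lt_succ_iff_lt_or_eq.mp hij with h | h
      · exact lt_trans (hdec k (by omega)) (ih h (by omega))
      · rw [h]; exact hdec k (by omega)
  -- no integer lies strictly between consecutive terms
  have hA : ∀ i, i < n → ∀ z : ℤ, ¬ (q (i + 1) < (z : ℚ) ∧ (z : ℚ) < q i) := by
    rintro i hi z ⟨h1, h2⟩
    have e := huni i hi
    have h1' : (q (i + 1)).num * 1 < z * ((q (i + 1)).den : ℤ) := by
      have := (rat_lt_iff' _ _).mp h1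
      simpa using this
    have h2' : z * ((q i).den : ℤ) < (q i).num * 1 := by
      have := (rat_lt_iff' _ _).mp h2
      simpa using this
    have h1i : (q (i + 1)).num + 1 ≤ z * ((q (i + 1)).den : ℤ) := by
      omega
    have h2i : z * ((q i).den : ℤ) + 1 ≤ (q i).num := by omega
    have hb1 := mul_le_mul_of_nonneg_right h2i (le_of_lt (hdpos (i + 1)))
    have hb2 := mul_le_mul_of_nonneg_right h1i (le_of_lt (hdpos i))
    have d1 := hdpos i
    have d2 := hdpos (i + 1)
    nlinarith [hb1, hb2, e, d1, d2]
  -- every integer in the open interval is a chain term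
  have hB : ∀ j : ℤ, N ≤ j → j ≤ N + a → ∃ i ≤ n, q i = (j : ℚ) := by
    intro j hj1 hj2
    obtain ⟨hjl, hjr⟩ := (hint j).mpr ⟨hj1, hj2⟩
    have hex : ∃ i, q i ≤ (j : ℚ) := ⟨n, by rw [hn]; exact le_of_lt hjl⟩
    set i := Nat.find hex with hidef
    have hi : q i ≤ (j : ℚ) := Nat.find_spec hex
    have hile : i ≤ n := Nat.find_le (by rw [hn]; exact le_of_lt hjl)
    have hipos : 0 < i := by
      rcases Nat.eq_zero_or_pos i with h | h
      · exfalso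
        rw [h, h0] at hi
        exact absurd hi (not_le.mpr hjr)
      · exact h
    have hprev : (j : ℚ) < q (i - 1) := by
      have h := Nat.find_min hex (show i - 1 < i by omega)
      exact lt_of_not_ge h
    rcases hi.lt_or_eq with hlt | heq
    · exfalso
      have hin : i - 1 < n := by omega
      have := hA (i - 1) hin j
      rw [show i - 1 + 1 = i by omega] at this
      exact this ⟨hlt, hprev⟩
    · exact ⟨i, hile, heq⟩
  refine ⟨hB, ?_⟩
  intro ia i0 hian hi0n hqa hq0
  set D : ℕ → ℤ := fun i => ((q i).den : ℤ) with hD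
  -- convexity of denominators
  have hconv : ∀ i, i + 2 ≤ n → 2 * D (i + 1) ≤ D i + D (i + 2) := by
    intro i h
    have e1 := huni i (by omega)
    have e2 := huni (i + 1) (by omega)
    have key : ((q i).num + (q (i + 2)).num) * ((q (i + 1)).den : ℤ)
        = (q (i + 1)).num * (((q i).den : ℤ) + ((q (i + 2)).den : ℤ)) := by
      linear_combination e1 - e2
    have hdvd : ((q (i + 1)).den : ℤ) ∣ (((q i).den : ℤ) + ((q (i + 2)).den : ℤ)) := by
      have : ((q (i + 1)).den : ℤ) ∣ (q (i + 1)).num * (((q i).den : ℤ) + ((q (i + 2)).den : ℤ)) :=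
        ⟨(q i).num + (q (i + 2)).num, by rw [← key]; ring⟩
      exact (rat_coprime' (q (i + 1))).dvd_of_dvd_mul_left this
    obtain ⟨c, hc⟩ := hdvd
    have hnum : (q i).num + (q (i + 2)).num = (q (i + 1)).num * c := by
      have hne : ((q (i + 1)).den : ℤ) ≠ 0 := ne_of_gt (hdpos (i + 1))
      have : (((q i).num + (q (i + 2)).num)) * ((q (i + 1)).den : ℤ)
          = ((q (i + 1)).num * c) * ((q (i + 1)).den : ℤ) := by
        rw [key, hc]; ring
      exact mul_right_cancel₀ hne this
    have hcpos : 0 < c := by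
      by_contra hc0
      push_neg at hc0
      have hm := mul_le_mul_of_nonneg_left hc0 (le_of_lt (hdpos (i + 1)))
      rw [mul_zero] at hm
      have := hdpos i; have := hdpos (i + 2)
      omega
    have hc1 : c ≠ 1 := by
      intro hc1
      apply hmin (i + 1) (by omega) (by omega)
      constructor
      · simpa [hc1] using hnum.symm
      · have : ((q (i + 1)).den : ℤ) = ((q i).den : ℤ) + ((q (i + 2)).den : ℤ) := by
          rw [hc, hc1, mul_one]
        exact_mod_cast this
    have hc2 : 2 ≤ c := by omega
    have := hdpos (i + 1)
    calc 2 * D (i + 1) ≤ D (i + 1) * c := by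
          simp only [hD]; nlinarith [hdpos (i + 1)]
      _ = D i + D (i + 2) := by simp only [hD]; linarith [hc]
  -- differences of denominators are nondecreasing
  have hdiff : ∀ i j, i ≤ j → j + 1 ≤ n → D (i + 1) - D i ≤ D (j + 1) - D j := by
    intro i j
    induction j with
    | zero =>
      intro hij _
      have : i = 0 := by omega
      subst this
      exact le_refl _
    | succ k ih =>
      intro hij hjn
      rcases Nat.lt_succ_iff_lt_or_eq.mp (Nat.lt_succ_of_le hij) with h | h
      · have h1 := ih (by omega) (by omega)
        have h2 := hconv k (by omega)
        linarith
      · subst h; exact le_refl _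
  -- upward propagation: once nondecreasing, stays ≥
  have hup : ∀ i, D i ≤ D (i + 1) → ∀ k, i + 1 ≤ k → k ≤ n → D (i + 1) ≤ D k := by
    intro i hle k
    induction k with

    | zero => intro h _; omega
    | succ k ih =>
      intro h1 h2
      rcases Nat.lt_succ_iff_lt_or_eq.mp (Nat.lt_succ_of_le h1) with h | h
      · have ha := ih (by omega) (by omega)
        have hb := hdiff i k (by omega) (by omega)
        linarith
      · rw [← h]
  -- downward propagation
  have hdown : ∀ i, i + 1 ≤ n → D (i + 1) ≤ D i → ∀ m k, k + m = i → D i ≤ D k := by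
    intro i hin hle m
    induction m with
    | zero => intro k hk; rw [show k = i by omega]
    | succ m ih =>
      intro k hk
      have h1 : D i ≤ D (k + 1) := ih (k + 1) (by omega)
      have h2 : D (k + 1) - D k ≤ D (i + 1) - D i := hdiff k i (by omega) hin
      linarith
  have hDa : D ia = 1 := by
    have h : (q ia).den = 1 := by rw [hqa]; exact Rat.den_intCast _
    simp only [hD]; exact_mod_cast h
  have hD0 : D i0 = 1 := by
    have h : (q i0).den = 1 := by rw [hq0]; exact Rat.den_intCast _
    simp only [hD]; exact_mod_cast h
  constructor
  · -- decreasing denominators before the term equal to N + a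
    intro i hi
    by_contra hcon
    have hle : D i ≤ D (i + 1) := by
      simp only [hD]
      exact_mod_cast Nat.le_of_not_lt hcon
    have h1 : D (i + 1) ≤ D ia := hup i hle ia (by omega) hian
    have h2' : (q (i + 1)).den = 1 := by
      have h3 := hdpos (i + 1)
      have h4 : D (i + 1) ≤ 1 := hDa ▸ h1
      simp only [hD] at h4 h3
      omega
    have hz : ((q (i + 1)).num : ℚ) = q (i + 1) := (Rat.den_eq_one_iff _).mp h2'
    set z := (q (i + 1)).num with hzdef
    have hzt' : t' < (z : ℚ) := by
      rw [hz, ← hn]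
      exact hmono (i + 1) n (by omega) (le_refl n)
    have hzt : (z : ℚ) < t := by
      rw [hz, ← h0]
      exact hmono 0 (i + 1) (by omega) (by omega)
    have hzle : z ≤ N + a := ((hint z).mp ⟨hzt', hzt⟩).2
    have hgt : ((N + (a : ℤ) : ℤ) : ℚ) < (z : ℚ) := by
      rw [hz, ← hqa]
      exact hmono (i + 1) ia hi hian
    have : (N + (a : ℤ)) < z := by exact_mod_cast hgt
    omega
  · -- increasing denominators after the term equal to N
    intro i h1 h2
    by_contra hcon
    have hle : D (i + 1) ≤ D i := by
      simp only [hD]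
      exact_mod_cast Nat.le_of_not_lt hcon
    have hi0 : D i ≤ D i0 := hdown i (by omega) hle (i - i0) i0 (by omega)
    have h2' : (q i).den = 1 := by
      have h3 := hdpos i
      have h4 : D i ≤ 1 := hD0 ▸ hi0
      simp only [hD] at h4 h3
      omega
    have hz : ((q i).num : ℚ) = q i := (Rat.den_eq_one_iff _).mp h2'
    set z := (q i).num with hzdef
    have hzt' : t' < (z : ℚ) := by
      rw [hz, ← hn]
      exact hmono i n h2 (le_refl n)
    have hzt : (z : ℚ) < t := by
      rw [hz, ← h0]
      exact hmono 0 i (by omega) (by omega)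
    have hzge : N ≤ z := ((hint z).mp ⟨hzt', hzt⟩).1
    have hlt : (z : ℚ) < ((N : ℤ) : ℚ) := by
      rw [hz, ← hq0]
      exact hmono i0 i h1 (by omega)
    have : z < N := by exact_mod_cast hlt
    omega
end
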